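/- arXiv:2510.02021 — 8 statements merged into one kernel-verified Lean document; each statement's English description precedes it below -/
import Mathlib

section
/- Let B, U, I, D be positive integers with B ≥ U + I. Let H ∈ ℂ^{B×U} and J ∈ ℂ^{B×I} be such that the B×(U+I) matrix [H, J] has rank U + I. Let S_D ∈ S^{U×D}, W_D ∈ ℂ^{I×D}, and set Y_D = H S_D + J W_D (i.e., zero thermal noise). If the jammer is not eclipsed (perfect-CSI sense), then for every P ∈ 𝒢_{B−I}(ℂ^B) and every S̃ ∈ S^{U×D}, one has P (Y_D − H S̃) = 0 if and only if S̃ = S_D and P is the orthogonal projection onto the orthogonal complement of the column space of J. In particular, the minimization of ‖P (Y_D − H S̃)‖_F over (S̃, P) ∈ S^{U×D} × 𝒢_{B−I}(ℂ^B) has minimum value 0, attained at this unique point. -/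
open scoped BigOperators
open scoped Classical

noncomputable section

/-- The QPSK constellation `{(1+i)/√2, (1−i)/√2, (−1+i)/√2, (−1−i)/√2}`. -/
def QPSK : Finset ℂ :=
  {(1 + Complex.I) / (Real.sqrt 2 : ℂ), (1 - Complex.I) / (Real.sqrt 2 : ℂ),
   (-1 + Complex.I) / (Real.sqrt 2 : ℂ), (-1 - Complex.I) / (Real.sqrt 2 : ℂ)}

/-- The finite set of `U × D` matrices with all entries in the QPSK constellation. -/
def qpskMatrices (U D : ℕ) : Finset (Matrix (Fin U) (Fin D) ℂ) :=
  Fintype.piFinset fun _ : Fin U => Fintype.piFinset fun _ : Fin D => QPSK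

/-- Probability of an event under the uniform distribution on `S^{U×D}`. -/
def probM (U D : ℕ) (P : Matrix (Fin U) (Fin D) ℂ → Prop) : ℝ :=
  (((qpskMatrices U D).filter P).card : ℝ) / ((qpskMatrices U D).card : ℝ)

/-- The finite set of vectors in `S^D`. -/
def qpskVecs (D : ℕ) : Finset (Fin D → ℂ) := Fintype.piFinset fun _ : Fin D => QPSK

/-- The ℓ₀-"norm": number of nonzero entries. -/
def zeroNorm {D : ℕ} (w : Fin D → ℂ) : ℕ := (Finset.univ.filter fun k => w k ≠ 0).card

/-- Two vectors are collinear if stacking them gives a matrix of rank at most 1. -/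
def Collinear2 {D : ℕ} (x y : Fin D → ℂ) : Prop :=
  (Matrix.of ![x, y]).rank ≤ 1

/-- `qProb D w`: probability, for `s` uniform on `S^D`, that some `s̃ ∈ S^D`, `s̃ ≠ s`,
has `s̃ − s` collinear with `w`. -/
def qProb (D : ℕ) (w : Fin D → ℂ) : ℝ :=
  (((qpskVecs D).filter fun s => ∃ st : Fin D → ℂ, (∀ k, st k ∈ QPSK) ∧ st ≠ s ∧
      Collinear2 (st - s) w).card : ℝ) / ((qpskVecs D).card : ℝ)

/-- Eclipsing in the perfect-CSI sense. -/
def EclipsedCSI {U I D : ℕ} (S_D : Matrix (Fin U) (Fin D) ℂ)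
    (W_D : Matrix (Fin I) (Fin D) ℂ) : Prop :=
  ∃ St : Matrix (Fin U) (Fin D) ℂ, (∀ i j, St i j ∈ QPSK) ∧ St ≠ S_D ∧
    (Matrix.fromRows (S_D - St) W_D).rank ≤ I

/-- `𝒢_{B−I}(ℂ^B)`: Hermitian idempotent `B×B` matrices `P` with `rank (1 − P) ≤ I`. -/
def Grassmannian (B I : ℕ) : Set (Matrix (Fin B) (Fin B) ℂ) :=
  {P | P.IsHermitian ∧ P * P = P ∧ (1 - P).rank ≤ I}

/-- `P` is the orthogonal projection onto the orthogonal complement of the column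
space of `J`. -/
def IsOrthProjComplCol {B I : ℕ} (J : Matrix (Fin B) (Fin I) ℂ)
    (P : Matrix (Fin B) (Fin B) ℂ) : Prop :=
  P.IsHermitian ∧ P * P = P ∧
    LinearMap.range (Matrix.toEuclideanLin P) = (LinearMap.range (Matrix.toEuclideanLin J))ᗮ

/-- Squared Frobenius norm. -/
def sqFrob {m n : ℕ} (A : Matrix (Fin m) (Fin n) ℂ) : ℝ := ∑ i, ∑ j, ‖A i j‖ ^ 2

/-- Right pseudoinverse `S_Tᴴ (S_T S_Tᴴ)⁻¹` of a (full-rank, wide) pilot matrix. -/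
def pinvWide {U T : ℕ} (S_T : Matrix (Fin U) (Fin T) ℂ) : Matrix (Fin T) (Fin U) ℂ :=
  S_T.conjTranspose * (S_T * S_T.conjTranspose)⁻¹

/-- Eclipsing in the channel-estimation sense. -/
def EclipsedCE {U I D T : ℕ} (S_T : Matrix (Fin U) (Fin T) ℂ)
    (S_D : Matrix (Fin U) (Fin D) ℂ) (W_T : Matrix (Fin I) (Fin T) ℂ)
    (W_D : Matrix (Fin I) (Fin D) ℂ) : Prop :=
  ∃ St : Matrix (Fin U) (Fin D) ℂ, (∀ i j, St i j ∈ QPSK) ∧ St ≠ S_D ∧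
    (Matrix.fromRows (S_D - St) (W_D - W_T * pinvWide S_T * St)).rank ≤ I

end


open scoped BigOperators
open scoped Classical

open Module Matrix LinearMap

noncomputable section

namespace Stmt0Aux

/-- inclusion of left block -/
def inlL (m1 m2 : ℕ) : (Fin m1 → ℂ) →ₗ[ℂ] (Fin m1 ⊕ Fin m2 → ℂ) where
  toFun v := Sum.elim v 0
  map_add' u v := by ext (i|i) <;> simp
  map_smul' c v := by ext (i|i) <;> simp

def inrL (m1 m2 : ℕ) : (Fin m2 → ℂ) →ₗ[ℂ] (Fin m1 ⊕ Fin m2 → ℂ) where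
  toFun v := Sum.elim 0 v
  map_add' u v := by ext (i|i) <;> simp
  map_smul' c v := by ext (i|i) <;> simp

lemma rank_add_le {m : Type*} {n : ℕ} (A B : Matrix m (Fin n) ℂ) :
    (A + B).rank ≤ A.rank + B.rank := by
  have hle : LinearMap.range (A + B).mulVecLin ≤
      LinearMap.range A.mulVecLin ⊔ LinearMap.range B.mulVecLin := by
    rintro y ⟨x, rfl⟩
    rw [Matrix.mulVecLin_apply, Matrix.add_mulVec]
    exact Submodule.add_mem_sup ⟨x, rfl⟩ ⟨x, rfl⟩
  calc (A + B).rank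
      ≤ finrank ℂ ↥(LinearMap.range A.mulVecLin ⊔ LinearMap.range B.mulVecLin) :=
        Submodule.finrank_mono hle
    _ ≤ A.rank + B.rank := Submodule.finrank_add_le_finrank_add_finrank _ _

lemma rank_fromRows_zero_right {m1 m2 n : ℕ} (A : Matrix (Fin m1) (Fin n) ℂ) :
    (Matrix.fromRows A (0 : Matrix (Fin m2) (Fin n) ℂ)).rank ≤ A.rank := by
  have hcomp : (Matrix.fromRows A (0 : Matrix (Fin m2) (Fin n) ℂ)).mulVecLin
      = (inlL m1 m2).comp A.mulVecLin := by
    apply LinearMap.ext; intro v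
    ext (i|i) <;> simp [Matrix.fromRows_mulVec, inlL]
  rw [Matrix.rank, hcomp, LinearMap.range_comp]
  exact (Submodule.finrank_map_le _ _).trans le_rfl

lemma rank_fromRows_zero_left {m1 m2 n : ℕ} (B : Matrix (Fin m2) (Fin n) ℂ) :
    (Matrix.fromRows (0 : Matrix (Fin m1) (Fin n) ℂ) B).rank ≤ B.rank := by
  have hcomp : (Matrix.fromRows (0 : Matrix (Fin m1) (Fin n) ℂ) B).mulVecLin
      = (inrL m1 m2).comp B.mulVecLin := by
    apply LinearMap.ext; intro v
    ext (i|i) <;> simp [Matrix.fromRows_mulVec, inrL]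
  rw [Matrix.rank, hcomp, LinearMap.range_comp]
  exact (Submodule.finrank_map_le _ _).trans le_rfl

lemma rank_fromRows_le {m1 m2 n : ℕ} (A : Matrix (Fin m1) (Fin n) ℂ)
    (B : Matrix (Fin m2) (Fin n) ℂ) :
    (Matrix.fromRows A B).rank ≤ A.rank + B.rank := by
  have hAB : Matrix.fromRows A B
      = Matrix.fromRows A (0 : Matrix (Fin m2) (Fin n) ℂ)
        + Matrix.fromRows (0 : Matrix (Fin m1) (Fin n) ℂ) B := by
    ext (i|i) j <;> simp [Matrix.fromRows_apply_inl, Matrix.fromRows_apply_inr]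
  rw [hAB]
  exact (rank_add_le _ _).trans
    (add_le_add (rank_fromRows_zero_right A) (rank_fromRows_zero_left B))

lemma rank_single_le {m n : ℕ} (i0 : Fin m) (j0 : Fin n) (d : ℂ) :
    (Matrix.of fun i j => if i = i0 ∧ j = j0 then d else 0).rank ≤ 1 := by
  have hle : LinearMap.range (Matrix.of fun i j =>
      if i = i0 ∧ j = j0 then d else 0 : Matrix (Fin m) (Fin n) ℂ).mulVecLin
      ≤ Submodule.span ℂ {(Pi.single i0 1 : Fin m → ℂ)} := by
    rintro y ⟨x, rfl⟩
    rw [Submodule.mem_span_singleton]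
    refine ⟨d * x j0, ?_⟩
    funext i
    simp only [Matrix.mulVecLin_apply, Matrix.mulVec, dotProduct, Matrix.of_apply,
      Pi.smul_apply, smul_eq_mul]
    rcases eq_or_ne i i0 with rfl | hi
    · simp [Finset.sum_ite_eq', mul_comm, Pi.single_eq_same]
    · simp [hi, Pi.single_eq_of_ne hi]
  have h1 : finrank ℂ (Submodule.span ℂ {(Pi.single i0 1 : Fin m → ℂ)}) ≤ 1 := by
    have : (Pi.single i0 1 : Fin m → ℂ) ≠ 0 := by
      intro h
      have := congrFun h i0
      simp [Pi.single_eq_same] at this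
    rw [finrank_span_singleton this]
  exact (Submodule.finrank_mono hle).trans h1

lemma ker_eq_orthogonal_range {n : ℕ}
    (T : EuclideanSpace ℂ (Fin n) →ₗ[ℂ] EuclideanSpace ℂ (Fin n))
    (hT : T.IsSymmetric) : LinearMap.ker T = (LinearMap.range T)ᗮ := by
  ext x
  simp only [LinearMap.mem_ker, Submodule.mem_orthogonal]
  constructor
  · rintro hx u ⟨y, rfl⟩
    rw [hT y x, hx, inner_zero_right]
  · intro hx
    have h1 : inner ℂ (T (T x)) x = (0 : ℂ) := hx (T (T x)) ⟨T x, rfl⟩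
    rw [hT (T x) x] at h1
    exact inner_self_eq_zero.mp h1

lemma finrank_range_toEuclideanLin {m n : ℕ} (A : Matrix (Fin m) (Fin n) ℂ) :
    finrank ℂ (LinearMap.range (Matrix.toEuclideanLin A)) = A.rank :=
  (Matrix.rank_eq_finrank_range_toLin A (PiLp.basisFun 2 ℂ (Fin m))
    (PiLp.basisFun 2 ℂ (Fin n))).symm

lemma toEuclideanLin_mul {l m n : ℕ} (A : Matrix (Fin l) (Fin m) ℂ)
    (B : Matrix (Fin m) (Fin n) ℂ) :
    Matrix.toEuclideanLin (A * B)
      = (Matrix.toEuclideanLin A).comp (Matrix.toEuclideanLin B) :=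
  Matrix.toLin_mul (PiLp.basisFun 2 ℂ (Fin n)) (PiLp.basisFun 2 ℂ (Fin m))
    (PiLp.basisFun 2 ℂ (Fin l)) A B

end Stmt0Aux

end

/-- With perfect CSI and zero noise, if the jammer is not eclipsed, then
`P (Y_D − H S̃) = 0` iff `S̃ = S_D` and `P` is the orthogonal projection onto the
orthogonal complement of the column space of `J`; in particular the minimization of
the Frobenius norm has minimum value 0, attained at this unique point. -/
theorem stmt0 (B U I D : ℕ) (hB : 0 < B) (hU : 0 < U) (hI : 0 < I) (hD : 0 < D)
    (hBUI : U + I ≤ B)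
    (H : Matrix (Fin B) (Fin U) ℂ) (J : Matrix (Fin B) (Fin I) ℂ)
    (hrank : (Matrix.fromCols H J).rank = U + I)
    (S_D : Matrix (Fin U) (Fin D) ℂ) (hSD : ∀ i j, S_D i j ∈ QPSK)
    (W_D : Matrix (Fin I) (Fin D) ℂ)
    (Y_D : Matrix (Fin B) (Fin D) ℂ) (hY : Y_D = H * S_D + J * W_D)
    (hecl : ¬ EclipsedCSI S_D W_D) :
    ∀ P ∈ Grassmannian B I, ∀ St : Matrix (Fin U) (Fin D) ℂ, (∀ i j, St i j ∈ QPSK) →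
      (P * (Y_D - H * St) = 0 ↔ (St = S_D ∧ IsOrthProjComplCol J P)) := by
  intro P hP St hStQ
  obtain ⟨hHerm, hIdem, hR1P⟩ := hP
  classical
  set A := Matrix.fromCols H J with hA
  have hAinj : Function.Injective A.mulVecLin := by
    rw [← LinearMap.ker_eq_bot]
    have h1 := LinearMap.finrank_range_add_finrank_ker A.mulVecLin
    have h2 : Module.finrank ℂ (LinearMap.range A.mulVecLin) = U + I := hrank
    rw [h2, Module.finrank_fintype_fun_eq_card] at h1
    simp only [Fintype.card_sum, Fintype.card_fin] at h1
    have h3 : Module.finrank ℂ (LinearMap.ker A.mulVecLin) = 0 := by omega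
    exact Submodule.finrank_eq_zero.mp h3
  have hJinj : Function.Injective J.mulVecLin := by
    rw [← LinearMap.ker_eq_bot, LinearMap.ker_eq_bot']
    intro x hx
    have h0 : A.mulVecLin (Sum.elim 0 x) = A.mulVecLin 0 := by
      rw [map_zero]
      rw [Matrix.mulVecLin_apply, hA, Matrix.fromCols_mulVec_sumElim]
      rw [Matrix.mulVec_zero]
      rw [Matrix.mulVecLin_apply] at hx
      rw [hx, add_zero]
    have h1 := hAinj h0
    exact funext fun i => congrFun h1 (Sum.inr i)
  have hJrank : J.rank = I := by
    have h1 := LinearMap.finrank_range_add_finrank_ker J.mulVecLin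
    rw [LinearMap.ker_eq_bot.mpr hJinj, finrank_bot, add_zero,
      Module.finrank_fintype_fun_eq_card, Fintype.card_fin] at h1
    exact h1
  have hkerP : LinearMap.ker P.mulVecLin = LinearMap.range (1 - P).mulVecLin := by
    ext x
    simp only [LinearMap.mem_ker, LinearMap.mem_range, Matrix.mulVecLin_apply]
    constructor
    · intro hx
      exact ⟨x, by rw [Matrix.sub_mulVec, Matrix.one_mulVec, hx, sub_zero]⟩
    · rintro ⟨y, rfl⟩
      rw [Matrix.mulVec_mulVec]
      have hz : P * (1 - P) = 0 := by rw [Matrix.mul_sub, Matrix.mul_one, hIdem, sub_self]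
      rw [hz, Matrix.zero_mulVec]
  have hfkerP : Module.finrank ℂ (LinearMap.ker P.mulVecLin) ≤ I := by
    rw [hkerP]; exact hR1P
  have hsym : (Matrix.toEuclideanLin P).IsSymmetric :=
    Matrix.isHermitian_iff_isSymmetric.mp hHerm
  have hkerTP : LinearMap.ker (Matrix.toEuclideanLin P)
      = (LinearMap.range (Matrix.toEuclideanLin P))ᗮ :=
    Stmt0Aux.ker_eq_orthogonal_range _ hsym
  constructor
  · intro h
    have hfact : Y_D - H * St = A * Matrix.fromRows (S_D - St) W_D := by
      rw [hY, hA, Matrix.fromCols_mul_fromRows, Matrix.mul_sub]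
      abel
    rw [hfact] at h
    have hrangele : LinearMap.range (A * Matrix.fromRows (S_D - St) W_D).mulVecLin
        ≤ LinearMap.ker P.mulVecLin := by
      rintro y ⟨x, rfl⟩
      show P.mulVecLin _ = 0
      rw [Matrix.mulVecLin_apply, Matrix.mulVecLin_apply, Matrix.mulVec_mulVec, h,
        Matrix.zero_mulVec]
    have hrankN : (Matrix.fromRows (S_D - St) W_D).rank ≤ I := by
      have e1 : (A * Matrix.fromRows (S_D - St) W_D).rank
          = (Matrix.fromRows (S_D - St) W_D).rank := by
        rw [Matrix.rank, Matrix.rank, Matrix.mulVecLin_mul, LinearMap.range_comp]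
        exact (LinearEquiv.finrank_eq (Submodule.equivMapOfInjective A.mulVecLin hAinj _)).symm
      calc (Matrix.fromRows (S_D - St) W_D).rank
          = (A * Matrix.fromRows (S_D - St) W_D).rank := e1.symm
        _ ≤ Module.finrank ℂ (LinearMap.ker P.mulVecLin) := Submodule.finrank_mono hrangele
        _ ≤ I := hfkerP
    have hSt : St = S_D := by
      by_contra hne
      exact hecl ⟨St, hStQ, hne, hrankN⟩
    subst hSt
    have hYJ : Y_D - H * St = J * W_D := by rw [hY]; abel
    rw [← hfact, hYJ] at h
    have hPJW : P * J * W_D = 0 := by rw [Matrix.mul_assoc, h]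
    have hWle : W_D.rank ≤ I := le_trans W_D.rank_le_card_height (by simp)
    have hWge : I ≤ W_D.rank := by
      by_contra hlt
      push_neg at hlt
      set i0 : Fin U := ⟨0, hU⟩
      set j0 : Fin D := ⟨0, hD⟩
      set a : ℂ := (1 + Complex.I) / (Real.sqrt 2 : ℂ) with ha
      set b : ℂ := (1 - Complex.I) / (Real.sqrt 2 : ℂ) with hb
      have hs2 : (Real.sqrt 2 : ℂ) ≠ 0 := by
        rw [Complex.ofReal_ne_zero]
        exact ne_of_gt (Real.sqrt_pos.mpr two_pos)
      have hab : a ≠ b := by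
        intro hEq
        rw [ha, hb, div_eq_div_iff hs2 hs2] at hEq
        have h2 : (1 : ℂ) + Complex.I = 1 - Complex.I := mul_right_cancel₀ hs2 hEq
        have h3 : (2 : ℂ) * Complex.I = 0 := by linear_combination h2
        simp [Complex.I_ne_zero] at h3
      set c : ℂ := if St i0 j0 = a then b else a with hc
      have hcQ : c ∈ QPSK := by
        rw [hc]; split_ifs <;> simp [QPSK, ha, hb]
      have hcne : c ≠ St i0 j0 := by
        rw [hc]; split_ifs with hsa
        · rw [hsa]; exact fun hh => hab hh.symm
        · exact fun hh => hsa hh.symm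
      set St0 : Matrix (Fin U) (Fin D) ℂ :=
        Matrix.of (fun i j => if i = i0 ∧ j = j0 then c else St i j) with hSt0
      have hSt0Q : ∀ i j, St0 i j ∈ QPSK := by
        intro i j
        rw [hSt0]
        dsimp only [Matrix.of_apply]
        split_ifs
        · exact hcQ
        · exact hStQ i j
      have hSt0ne : St0 ≠ St := by
        intro hEq
        apply hcne
        have h4 := congrFun (congrFun hEq i0) j0
        simpa [hSt0] using h4
      have hD0 : St - St0 = Matrix.of fun i j =>
          if i = i0 ∧ j = j0 then St i0 j0 - c else 0 := by
        ext i j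
        by_cases hij : i = i0 ∧ j = j0
        · rcases hij with ⟨rfl, rfl⟩
          simp [hSt0]
        · simp [hSt0, hij]
      have hrkD0 : (St - St0).rank ≤ 1 := by
        rw [hD0]; exact Stmt0Aux.rank_single_le i0 j0 _
      have hrk : (Matrix.fromRows (St - St0) W_D).rank ≤ I := by
        calc (Matrix.fromRows (St - St0) W_D).rank
            ≤ (St - St0).rank + W_D.rank := Stmt0Aux.rank_fromRows_le _ _
          _ ≤ I := by omega
      exact hecl ⟨St0, hSt0Q, hSt0ne, hrk⟩
    have hWrank : W_D.rank = I := le_antisymm hWle hWge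
    have hWsurj : Function.Surjective W_D.mulVecLin := by
      rw [← LinearMap.range_eq_top]
      apply Submodule.eq_top_of_finrank_eq
      rw [Module.finrank_fintype_fun_eq_card, Fintype.card_fin]
      exact hWrank
    have hPJ : P * J = 0 := by
      ext i j
      obtain ⟨y, hy⟩ := hWsurj (Pi.single j 1)
      rw [Matrix.mulVecLin_apply] at hy
      have h3 : (P * J) *ᵥ Pi.single j 1 = 0 := by
        rw [← hy, Matrix.mulVec_mulVec, hPJW, Matrix.zero_mulVec]
      have h4 := congrFun h3 i
      simpa using h4
    refine ⟨rfl, hHerm, hIdem, ?_⟩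
    have hcomp : (Matrix.toEuclideanLin P).comp (Matrix.toEuclideanLin J) = 0 := by
      rw [← Stmt0Aux.toEuclideanLin_mul, hPJ, map_zero]
    have hle1 : LinearMap.range (Matrix.toEuclideanLin J)
        ≤ LinearMap.ker (Matrix.toEuclideanLin P) := LinearMap.range_le_ker_iff.mpr hcomp
    have hrangeTJ : Module.finrank ℂ (LinearMap.range (Matrix.toEuclideanLin J)) = I := by
      rw [Stmt0Aux.finrank_range_toEuclideanLin]; exact hJrank
    have hfkerTP : Module.finrank ℂ (LinearMap.ker (Matrix.toEuclideanLin P)) ≤ I := by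
      have e1 := LinearMap.finrank_range_add_finrank_ker (Matrix.toEuclideanLin P)
      have e2 := LinearMap.finrank_range_add_finrank_ker P.mulVecLin
      rw [finrank_euclideanSpace, Fintype.card_fin] at e1
      rw [Module.finrank_fintype_fun_eq_card, Fintype.card_fin] at e2
      rw [Stmt0Aux.finrank_range_toEuclideanLin] at e1
      have e3 : Module.finrank ℂ (LinearMap.range P.mulVecLin) = P.rank := rfl
      rw [e3] at e2
      omega
    have hEq : LinearMap.range (Matrix.toEuclideanLin J)
        = LinearMap.ker (Matrix.toEuclideanLin P) :=
      Submodule.eq_of_le_of_finrank_le hle1 (by rw [hrangeTJ]; exact hfkerTP)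
    rw [hkerTP] at hEq
    rw [hEq, Submodule.orthogonal_orthogonal]
  · rintro ⟨rfl, hH2, hI2, hrange⟩
    have hYJ : Y_D - H * St = J * W_D := by rw [hY]; abel
    have hker : LinearMap.ker (Matrix.toEuclideanLin P)
        = LinearMap.range (Matrix.toEuclideanLin J) := by
      rw [hkerTP, hrange, Submodule.orthogonal_orthogonal]
    have hcomp : (Matrix.toEuclideanLin P).comp (Matrix.toEuclideanLin J) = 0 :=
      LinearMap.range_le_ker_iff.mp (le_of_eq hker.symm)
    have hPJ : P * J = 0 := by
      apply (Matrix.toEuclideanLin (𝕜 := ℂ)).injective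
      rw [Stmt0Aux.toEuclideanLin_mul, hcomp, map_zero]
    rw [hYJ, ← Matrix.mul_assoc, hPJ, Matrix.zero_mul]
end

section
/- Let U, D ≥ 1, fix w ∈ ℂ^D, and let S_D be drawn uniformly at random from S^{U×D}. Then the probability that the single-antenna jammer with transmit vector w is eclipsed (perfect-CSI sense with I = 1, i.e., there exists S̃ ∈ S^{U×D} with S̃ ≠ S_D such that the (U+1)×D matrix obtained by stacking S_D − S̃ on top of wᵀ has rank at most 1) is at most p_e(w), where p_e(w) = 1 if w = 0, and p_e(w) = 1 − (1 − (2^{‖w‖₀} − 1)/4^{‖w‖₀ − 1})^U otherwise. -/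
open scoped BigOperators
open scoped Classical

noncomputable section QJAux
namespace QJ
open Complex Finset Matrix

lemma sq2_sq : ((Real.sqrt 2 : ℝ) : ℂ)^2 = 2 := by
  norm_cast
  rw [Real.sq_sqrt]
  norm_num

lemma sq2_ne : ((Real.sqrt 2 : ℝ) : ℂ) ≠ 0 := by
  intro h
  have := sq2_sq
  rw [h] at this
  norm_num at this

lemma sqA : ((1 + I) / (Real.sqrt 2 : ℂ))^2 = I := by
  rw [div_pow, sq2_sq]
  rw [div_eq_iff (by norm_num : (2:ℂ) ≠ 0)]
  linear_combination Complex.I_sq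

lemma sqB : ((1 - I) / (Real.sqrt 2 : ℂ))^2 = -I := by
  rw [div_pow, sq2_sq]
  rw [div_eq_iff (by norm_num : (2:ℂ) ≠ 0)]
  linear_combination Complex.I_sq

lemma mem_QPSK_iff {z : ℂ} : z ∈ QPSK ↔ z^4 = -1 := by
  have hA := sqA
  have hB := sqB
  constructor
  · intro hz
    simp only [QPSK, Finset.mem_insert, Finset.mem_singleton] at hz
    rcases hz with h|h|h|h <;> subst h
    · linear_combination (((1 + I) / (Real.sqrt 2 : ℂ))^2 + I) * hA + Complex.I_sq
    · linear_combination (((1 - I) / (Real.sqrt 2 : ℂ))^2 - I) * hB + Complex.I_sq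
    · have e : (-1 + I) / (Real.sqrt 2 : ℂ) = -((1 - I) / (Real.sqrt 2 : ℂ)) := by ring
      rw [e]
      linear_combination (((1 - I) / (Real.sqrt 2 : ℂ))^2 - I) * hB + Complex.I_sq
    · have e : (-1 - I) / (Real.sqrt 2 : ℂ) = -((1 + I) / (Real.sqrt 2 : ℂ)) := by ring
      rw [e]
      linear_combination (((1 + I) / (Real.sqrt 2 : ℂ))^2 + I) * hA + Complex.I_sq
  · intro hz
    have h4 : (z^2 - I) * (z^2 + I) = 0 := by
      linear_combination hz - Complex.I_sq
    simp only [QPSK, Finset.mem_insert, Finset.mem_singleton]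
    rcases mul_eq_zero.1 h4 with h|h
    · have h2 : (z - (1+I)/(Real.sqrt 2 : ℂ)) * (z + (1+I)/(Real.sqrt 2 : ℂ)) = 0 := by
        linear_combination h - sqA
      rcases mul_eq_zero.1 h2 with h'|h'
      · exact Or.inl (sub_eq_zero.mp h')
      · refine Or.inr (Or.inr (Or.inr ?_))
        have := eq_neg_of_add_eq_zero_left h'
        rw [this]; ring
    · have h2 : (z - (1-I)/(Real.sqrt 2 : ℂ)) * (z + (1-I)/(Real.sqrt 2 : ℂ)) = 0 := by
        linear_combination h - sqB
      rcases mul_eq_zero.1 h2 with h'|h'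
      · exact Or.inr (Or.inl (sub_eq_zero.mp h'))
      · refine Or.inr (Or.inr (Or.inl ?_))
        have := eq_neg_of_add_eq_zero_left h'
        rw [this]; ring

lemma QPSK_card : QPSK.card = 4 := by
  have hs := sq2_ne
  have key : ∀ x y : ℂ, x / (Real.sqrt 2 : ℂ) = y / (Real.sqrt 2 : ℂ) → x = y := by
    intro x y h
    field_simp at h
    exact h
  rw [QPSK]
  rw [Finset.card_insert_of_notMem, Finset.card_insert_of_notMem,
      Finset.card_insert_of_notMem, Finset.card_singleton]
  · simp only [Finset.mem_singleton]
    intro h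
    have := key _ _ h
    norm_num [Complex.ext_iff] at this
  · simp only [Finset.mem_insert, Finset.mem_singleton]
    rintro (h|h) <;> have := key _ _ h <;>
      norm_num [Complex.ext_iff] at this
  · simp only [Finset.mem_insert, Finset.mem_singleton]
    rintro (h|h|h) <;> have := key _ _ h <;>
      norm_num [Complex.ext_iff] at this

lemma QPSK_ne_zero {z : ℂ} (hz : z ∈ QPSK) : z ≠ 0 := by
  intro h
  rw [mem_QPSK_iff, h] at hz
  norm_num at hz

lemma root4_iff {r : ℂ} : r^4 = 1 ↔ (r = 1 ∨ r = -1 ∨ r = I ∨ r = -I) := by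
  constructor
  · intro h
    have h4 : (r - 1) * (r + 1) * ((r - I) * (r + I)) = 0 := by
      linear_combination h - (r^2 - 1) * Complex.I_sq
    rcases mul_eq_zero.1 h4 with h'|h'
    · rcases mul_eq_zero.1 h' with h''|h''
      · exact Or.inl (sub_eq_zero.mp h'')
      · exact Or.inr (Or.inl (eq_neg_of_add_eq_zero_left h''))
    · rcases mul_eq_zero.1 h' with h''|h''
      · exact Or.inr (Or.inr (Or.inl (sub_eq_zero.mp h'')))
      · exact Or.inr (Or.inr (Or.inr (eq_neg_of_add_eq_zero_left h'')))
  · rintro (h|h|h|h) <;> subst h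
    · norm_num
    · norm_num
    · linear_combination (I^2 - 1) * Complex.I_sq
    · linear_combination (I^2 - 1) * Complex.I_sq

lemma ratio_root4 {a b : ℂ} (ha : a ∈ QPSK) (hb : b ∈ QPSK) : (a / b)^4 = 1 := by
  rw [mem_QPSK_iff] at ha hb
  rw [div_pow, ha, hb]
  norm_num

/-- The workhorse: if `a ∈ QPSK` and `a + d ∈ QPSK` with `d ≠ 0`, there is
`r ∈ {I, -1, -I}` with `a * (r - 1) = d`. -/
lemma step_lemma {a d : ℂ} (ha : a ∈ QPSK) (had : a + d ∈ QPSK) (hd : d ≠ 0) :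
    ∃ r : ℂ, (r = I ∨ r = -1 ∨ r = -I) ∧ a * (r - 1) = d := by
  have ha0 : a ≠ 0 := QPSK_ne_zero ha
  have hr4 : ((a + d) / a)^4 = 1 := ratio_root4 had ha
  have key : a * ((a + d)/a - 1) = d := by field_simp; ring
  rcases root4_iff.1 hr4 with h|h|h|h
  · exfalso
    apply hd
    have := key
    rw [h] at this
    simpa using this.symm
  · exact ⟨(a+d)/a, Or.inr (Or.inl h), key⟩
  · exact ⟨(a+d)/a, Or.inl h, key⟩
  · exact ⟨(a+d)/a, Or.inr (Or.inr h), key⟩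

lemma Im1_pow4 : (I - 1)^4 = -4 := by
  linear_combination (I^2 - 4*I + 5) * Complex.I_sq

lemma negIm1_pow4 : (-I - 1)^4 = -4 := by
  linear_combination (I^2 + 4*I + 5) * Complex.I_sq

lemma pow4_of_mul {a u b : ℂ} (h : a * u = b) : a^4 * u^4 = b^4 := by
  rw [← mul_pow, h]

def TS (d : ℂ) : Finset ℂ := QPSK.filter (fun a => a + d ∈ QPSK)

lemma hIm1_ne : (I - 1 : ℂ) ≠ 0 := by
  intro h
  have : (I:ℂ) = 1 := by linear_combination h
  have := congrArg Complex.im this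
  simp at this

lemma hnegIm1_ne : (-I - 1 : ℂ) ≠ 0 := by
  intro h
  have : (I:ℂ) = -1 := by linear_combination -h
  have := congrArg Complex.im this
  simp at this

/-- The key per-coordinate trichotomy. -/
lemma T_cases {a d : ℂ} (ha : a ∈ QPSK) (had : a + d ∈ QPSK) (hd : d ≠ 0) :
    a = d / (I - 1) ∨ a = d / (-2) ∨ a = d / (-I - 1) := by
  obtain ⟨r, hr, key⟩ := step_lemma ha had hd
  rcases hr with h|h|h <;> subst h
  · left
    rw [eq_div_iff hIm1_ne]
    exact key
  · right; left
    rw [eq_div_iff (by norm_num : (-2:ℂ) ≠ 0)]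
    linear_combination key
  · right; right
    rw [eq_div_iff hnegIm1_ne]
    linear_combination key

lemma card_T_le_two {d : ℂ} (hd : d ≠ 0) :
    (QPSK.filter (fun a => a + d ∈ QPSK)).card ≤ 2 := by
  by_contra hc
  push_neg at hc
  set T := QPSK.filter (fun a => a + d ∈ QPSK) with hT
  have hsub : T ⊆ {d / (I - 1), d / (-2), d / (-I - 1)} := by
    intro a haT
    rw [hT, Finset.mem_filter] at haT
    have := T_cases haT.1 haT.2 hd
    simp only [Finset.mem_insert, Finset.mem_singleton]
    tauto
  have hcard3 : ({d / (I - 1), d / (-2), d / (-I - 1)} : Finset ℂ).card ≤ 3 := by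
    apply le_trans (Finset.card_insert_le _ _)
    simp [Finset.card_insert_le]
    have := Finset.card_insert_le (d / (-2)) ({d / (-I - 1)} : Finset ℂ)
    simp at this
    omega
  have hEq : T = {d / (I - 1), d / (-2), d / (-I - 1)} :=
    Finset.eq_of_subset_of_card_le hsub (by omega)
  have h1 : d / (I - 1) ∈ T := by rw [hEq]; simp
  have h2 : d / (-2) ∈ T := by
    rw [hEq]
    simp only [Finset.mem_insert, Finset.mem_singleton]
    tauto
  rw [hT, Finset.mem_filter] at h1 h2
  have hx : (d / (I - 1))^4 = -1 := mem_QPSK_iff.1 h1.1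
  have hy : (d / (-2))^4 = -1 := mem_QPSK_iff.1 h2.1
  have e1 : (d / (I-1)) * (I - 1) = d := div_mul_cancel₀ d hIm1_ne
  have e2 : (d / (-2)) * (-2) = d := div_mul_cancel₀ d (by norm_num)
  have p1 := pow4_of_mul e1
  have p2 := pow4_of_mul e2
  rw [hx, Im1_pow4] at p1
  rw [hy] at p2
  norm_num at p1 p2
  rw [← p1] at p2
  norm_num at p2


lemma card_TS_le_two {d : ℂ} (hd : d ≠ 0) : (TS d).card ≤ 2 :=
  card_T_le_two hd

lemma TS_cases {d a : ℂ} (hd : d ≠ 0) (ha : a ∈ TS d) :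
    a^4 = -1 ∧ (a * (I - 1) = d ∨ a * (-2) = d ∨ a * (-I - 1) = d) := by
  rw [TS, Finset.mem_filter] at ha
  refine ⟨mem_QPSK_iff.1 ha.1, ?_⟩
  obtain ⟨r, hr, key⟩ := step_lemma ha.1 ha.2 hd
  rcases hr with h|h|h <;> subst h
  · exact Or.inl key
  · exact Or.inr (Or.inl (by linear_combination key))
  · exact Or.inr (Or.inr key)

lemma TS_zero : TS 0 = QPSK := by
  rw [TS]
  apply Finset.filter_true_of_mem
  intro a ha
  simpa using ha

lemma edge_edge {x q ρ u v : ℂ} (hx4 : x^4 = -1) (hq : q^4 = -1)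
    (hu : u^4 = -4) (hv : v^4 = -4) (h : x * u = q * v * ρ) : ρ^4 = 1 := by
  have p := pow4_of_mul h
  rw [mul_pow, mul_pow, hx4, hq, hu, hv] at p
  linear_combination (-1/4 : ℂ) * p

lemma edge_diag {x q ρ v : ℂ} (hx4 : x^4 = -1) (hq : q^4 = -1)
    (hv : v^4 = -4) (h : x * (-2) = q * v * ρ) : ρ^4 = -4 := by
  have p := pow4_of_mul h
  rw [mul_pow, mul_pow, hx4, hq, hv, show ((-2:ℂ))^4 = 16 by norm_num] at p
  linear_combination (-1/4 : ℂ) * p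

lemma diag_edge {x q ρ u : ℂ} (hx4 : x^4 = -1) (hq : q^4 = -1)
    (hu : u^4 = -4) (h : x * u = -2 * q * ρ) : ρ^4 = -(1/4) := by
  have p := pow4_of_mul h
  rw [hx4, hu, mul_pow, mul_pow, hq, show ((-2:ℂ))^4 = 16 by norm_num] at p
  linear_combination (1/16 : ℂ) * p

lemma diag_diag {x q ρ : ℂ} (h : x * (-2) = -2 * q * ρ) : x = q * ρ := by
  linear_combination (-1/2 : ℂ) * h

/-- (A) edge box, ratio not a 4th root of unity: at most one element. -/
lemma TS_A {q ρ : ℂ} (hq : q^4 = -1) (hρ0 : ρ ≠ 0) (hρ : ρ^4 ≠ 1) :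
    (TS (q * (I - 1) * ρ)).card ≤ 1 := by
  have hq0 : q ≠ 0 := by intro h; rw [h] at hq; norm_num at hq
  have hd : q * (I - 1) * ρ ≠ 0 := mul_ne_zero (mul_ne_zero hq0 hIm1_ne) hρ0
  have key : ∀ a ∈ TS (q * (I - 1) * ρ), a * (-2) = q * (I - 1) * ρ := by
    intro a ha
    obtain ⟨ha4, h1|h2|h3⟩ := TS_cases hd ha
    · exact absurd (edge_edge ha4 hq Im1_pow4 Im1_pow4 h1) hρ
    · exact h2
    · exact absurd (edge_edge ha4 hq negIm1_pow4 Im1_pow4 h3) hρ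
  rw [Finset.card_le_one]
  intro a ha b hb
  have := (key a ha).trans (key b hb).symm
  exact mul_right_cancel₀ (by norm_num) this

/-- (B) edge box, ratio with `ρ^4 ∉ {1, -4}`: empty. -/
lemma TS_B {q ρ : ℂ} (hq : q^4 = -1) (hρ0 : ρ ≠ 0) (hρ : ρ^4 ≠ 1) (hρ' : ρ^4 ≠ -4) :
    TS (q * (I - 1) * ρ) = ∅ := by
  have hq0 : q ≠ 0 := by intro h; rw [h] at hq; norm_num at hq
  have hd : q * (I - 1) * ρ ≠ 0 := mul_ne_zero (mul_ne_zero hq0 hIm1_ne) hρ0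
  rw [Finset.eq_empty_iff_forall_notMem]
  intro a ha
  obtain ⟨ha4, h1|h2|h3⟩ := TS_cases hd ha
  · exact absurd (edge_edge ha4 hq Im1_pow4 Im1_pow4 h1) hρ
  · exact absurd (edge_diag ha4 hq Im1_pow4 h2) hρ'
  · exact absurd (edge_edge ha4 hq negIm1_pow4 Im1_pow4 h3) hρ

/-- (D) diagonal box, root-of-unity ratio: contained in a singleton. -/
lemma TS_D {q ρ : ℂ} (hq : q^4 = -1) (hρ0 : ρ ≠ 0) (hρ : ρ^4 = 1) :
    TS (-2 * q * ρ) ⊆ {q * ρ} := by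
  have hq0 : q ≠ 0 := by intro h; rw [h] at hq; norm_num at hq
  have hd : -2 * q * ρ ≠ 0 := mul_ne_zero (mul_ne_zero (by norm_num) hq0) hρ0
  intro a ha
  obtain ⟨ha4, h1|h2|h3⟩ := TS_cases hd ha
  · have := diag_edge ha4 hq Im1_pow4 h1
    rw [hρ] at this
    norm_num at this
  · simp [diag_diag h2]
  · have := diag_edge ha4 hq negIm1_pow4 h3
    rw [hρ] at this
    norm_num at this

/-- (E) diagonal box, `ρ^4 = -4`: empty. -/
lemma TS_E {q ρ : ℂ} (hq : q^4 = -1) (hρ0 : ρ ≠ 0) (hρ : ρ^4 = -4) :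
    TS (-2 * q * ρ) = ∅ := by
  have hq0 : q ≠ 0 := by intro h; rw [h] at hq; norm_num at hq
  have hd : -2 * q * ρ ≠ 0 := mul_ne_zero (mul_ne_zero (by norm_num) hq0) hρ0
  rw [Finset.eq_empty_iff_forall_notMem]
  intro a ha
  obtain ⟨ha4, h1|h2|h3⟩ := TS_cases hd ha
  · have := diag_edge ha4 hq Im1_pow4 h1
    rw [hρ] at this
    norm_num at this
  · have := diag_diag h2
    rw [this, mul_pow, hq, hρ] at ha4
    norm_num at ha4
  · have := diag_edge ha4 hq negIm1_pow4 h3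
    rw [hρ] at this
    norm_num at this

variable {D : ℕ}

def FullBox (w : Fin D → ℂ) (c : ℂ) : Finset (Fin D → ℂ) :=
  Fintype.piFinset fun k => TS (c * w k)

lemma mem_FullBox {w : Fin D → ℂ} {c : ℂ} {s : Fin D → ℂ} :
    s ∈ FullBox w c ↔ ∀ k, s k ∈ QPSK ∧ s k + c * w k ∈ QPSK := by
  simp [FullBox, Fintype.mem_piFinset, TS, Finset.mem_filter]

lemma FullBox_card_le_one {w : Fin D → ℂ} {c : ℂ} (hc : c ≠ 0)
    (k₁ : Fin D) (hk₁ : w k₁ ≠ 0) (h1 : (TS (c * w k₁)).card ≤ 1) :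
    (FullBox w c).card ≤
      2 ^ ((univ.filter fun k => w k ≠ 0).card - 1)
        * 4 ^ (univ.filter fun k : Fin D => ¬ w k ≠ 0).card := by
  rw [FullBox, Fintype.card_piFinset]
  rw [← Finset.prod_filter_mul_prod_filter_not univ (fun k => w k ≠ 0)]
  have h2 : ∀ k ∈ (univ.filter fun k : Fin D => ¬ w k ≠ 0),
      (TS (c * w k)).card = 4 := by
    intro k hk
    rw [Finset.mem_filter] at hk
    push_neg at hk
    rw [hk.2, mul_zero, TS_zero, QPSK_card]
  rw [Finset.prod_congr rfl h2, Finset.prod_const]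
  apply Nat.mul_le_mul_right
  have hk₁K : k₁ ∈ univ.filter fun k : Fin D => w k ≠ 0 := by
    simp [hk₁]
  rw [← Finset.mul_prod_erase _ _ hk₁K]
  calc (TS (c * w k₁)).card * ∏ k ∈ (univ.filter fun k : Fin D => w k ≠ 0).erase k₁,
        (TS (c * w k)).card
      ≤ 1 * 2 ^ ((univ.filter fun k : Fin D => w k ≠ 0).erase k₁).card := by
        apply Nat.mul_le_mul h1
        apply Finset.prod_le_pow_card
        intro k hk
        have hkK := Finset.mem_of_mem_erase hk
        rw [Finset.mem_filter] at hkK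
        exact card_TS_le_two (mul_ne_zero hc hkK.2)
    _ = 2 ^ ((univ.filter fun k : Fin D => w k ≠ 0).card - 1) := by
        rw [one_mul, Finset.card_erase_of_mem hk₁K]

lemma FullBox_card_le_gen {w : Fin D → ℂ} {c : ℂ} (hc : c ≠ 0) :
    (FullBox w c).card ≤
      2 ^ (univ.filter fun k : Fin D => w k ≠ 0).card
        * 4 ^ (univ.filter fun k : Fin D => ¬ w k ≠ 0).card := by
  rw [FullBox, Fintype.card_piFinset]
  rw [← Finset.prod_filter_mul_prod_filter_not univ (fun k => w k ≠ 0)]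
  have h2 : ∀ k ∈ (univ.filter fun k : Fin D => ¬ w k ≠ 0),
      (TS (c * w k)).card = 4 := by
    intro k hk
    rw [Finset.mem_filter] at hk
    push_neg at hk
    rw [hk.2, mul_zero, TS_zero, QPSK_card]
  rw [Finset.prod_congr rfl h2, Finset.prod_const]
  apply Nat.mul_le_mul_right
  apply Finset.prod_le_pow_card
  intro k hk
  rw [Finset.mem_filter] at hk
  exact card_TS_le_two (mul_ne_zero hc hk.2)

lemma FullBox_card_zero {w : Fin D → ℂ} {c : ℂ}
    (k₁ : Fin D) (h0 : TS (c * w k₁) = ∅) :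
    (FullBox w c).card = 0 := by
  rw [FullBox, Fintype.card_piFinset]
  apply Finset.prod_eq_zero (Finset.mem_univ k₁)
  rw [h0]
  rfl

lemma hI4 : (I : ℂ)^4 = 1 := by
  rw [show (4:ℕ) = 2*2 from rfl, pow_mul, I_sq]
  norm_num

lemma QPSK_mul_root {z r : ℂ} (hz : z ∈ QPSK) (hr : r^4 = 1) : r * z ∈ QPSK := by
  rw [mem_QPSK_iff] at hz ⊢
  rw [mul_pow, hz, hr, one_mul]

/-- Every bad vector lies in an edge box or a diagonal box. -/
lemma bad_subset {w : Fin D → ℂ} {k₀ : Fin D} (hk₀ : w k₀ ≠ 0) {s : Fin D → ℂ}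
    (hs : ∀ k, s k ∈ QPSK) {c : ℂ} (hc0 : c ≠ 0) (hc : ∀ k, s k + c * w k ∈ QPSK) :
    s ∈ (QPSK.biUnion fun q => FullBox w (q * (I - 1) / w k₀)) ∪
        (QPSK.biUnion fun q => FullBox w (-2 * q / w k₀)) := by
  have hd : c * w k₀ ≠ 0 := mul_ne_zero hc0 hk₀
  obtain ⟨r, hr, key⟩ := step_lemma (hs k₀) (hc k₀) hd
  have hbox : ∀ c' : ℂ, c' = c → s ∈ FullBox w c' := by
    intro c' h
    rw [h, mem_FullBox]
    exact fun k => ⟨hs k, hc k⟩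
  rcases hr with h|h|h <;> subst h
  · refine Finset.mem_union_left _ (Finset.mem_biUnion.2 ⟨s k₀, hs k₀, hbox _ ?_⟩)
    rw [div_eq_iff hk₀]
    linear_combination key
  · refine Finset.mem_union_right _ (Finset.mem_biUnion.2 ⟨s k₀, hs k₀, hbox _ ?_⟩)
    rw [div_eq_iff hk₀]
    linear_combination key
  · refine Finset.mem_union_left _ (Finset.mem_biUnion.2
      ⟨I * s k₀, QPSK_mul_root (hs k₀) hI4, hbox _ ?_⟩)
    rw [div_eq_iff hk₀]
    linear_combination key + s k₀ * Complex.I_sq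

lemma neg_I_pow4 : (-I : ℂ)^4 = 1 := by
  rw [show ((-I:ℂ))^4 = I^4 by ring, hI4]

lemma one_add_I_ne : (1 + I : ℂ) ≠ 0 := by
  intro h
  have := congrArg Complex.im h
  simp at this

/-- In the all-roots case, each diagonal box is inside the corresponding edge box. -/
lemma DBox_subset_EBox {w : Fin D → ℂ} {k₀ : Fin D} (hk₀ : w k₀ ≠ 0)
    (hR : ∀ k, w k ≠ 0 → (w k / w k₀)^4 = 1) {q : ℂ} (hq : q ∈ QPSK) :
    FullBox w (-2 * q / w k₀) ⊆ FullBox w (q * (I - 1) / w k₀) := by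
  have hq4 : q^4 = -1 := mem_QPSK_iff.1 hq
  intro s hsb
  rw [mem_FullBox] at hsb ⊢
  intro k
  obtain ⟨hsk, hadd⟩ := hsb k
  refine ⟨hsk, ?_⟩
  by_cases hwk : w k = 0
  · simpa [hwk] using hsk
  · have hρ0 : w k / w k₀ ≠ 0 := div_ne_zero hwk hk₀
    have hρ4 : (w k / w k₀)^4 = 1 := hR k hwk
    have hd : (-2 * q / w k₀) * w k = -2 * q * (w k / w k₀) := by ring
    have hmem : s k ∈ TS (-2 * q * (w k / w k₀)) := by
      rw [TS, Finset.mem_filter]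
      exact ⟨hsk, by rw [← hd]; exact hadd⟩
    have hsk_eq : s k = q * (w k / w k₀) :=
      Finset.mem_singleton.1 (TS_D hq4 hρ0 hρ4 hmem)
    have he : s k + (q * (I - 1) / w k₀) * w k = q * (w k / w k₀) * I := by
      rw [hsk_eq]; ring
    rw [he, mem_QPSK_iff, mul_pow, mul_pow, hq4, hρ4, hI4]
    norm_num

def FibS (w : Fin D → ℂ) (k₀ : Fin D) (q : ℂ) : Finset (Fin D → ℂ) :=
  Fintype.piFinset fun k =>
    if w k ≠ 0 then ({q * (w k / w k₀)} : Finset ℂ) else QPSK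

lemma FibS_subset_EBox {w : Fin D → ℂ} {k₀ : Fin D} (hk₀ : w k₀ ≠ 0)
    (hR : ∀ k, w k ≠ 0 → (w k / w k₀)^4 = 1) {q : ℂ} (hq : q ∈ QPSK) :
    FibS w k₀ q ⊆ FullBox w (q * (I - 1) / w k₀) := by
  have hq4 : q^4 = -1 := mem_QPSK_iff.1 hq
  intro s hsf
  rw [FibS, Fintype.mem_piFinset] at hsf
  rw [mem_FullBox]
  intro k
  have hsf := hsf k
  by_cases hwk : w k = 0
  · rw [if_neg (by simpa using hwk)] at hsf
    exact ⟨hsf, by simpa [hwk] using hsf⟩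
  · rw [if_pos hwk, Finset.mem_singleton] at hsf
    have hρ4 : (w k / w k₀)^4 = 1 := hR k hwk
    have hQ : s k ∈ QPSK := by
      rw [hsf, mem_QPSK_iff, mul_pow, hq4, hρ4]
      norm_num
    refine ⟨hQ, ?_⟩
    have he : s k + (q * (I - 1) / w k₀) * w k = q * (w k / w k₀) * I := by
      rw [hsf]; ring
    rw [he, mem_QPSK_iff, mul_pow, mul_pow, hq4, hρ4, hI4]
    norm_num

lemma FibS_subset_EBox' {w : Fin D → ℂ} {k₀ : Fin D} (hk₀ : w k₀ ≠ 0)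
    (hR : ∀ k, w k ≠ 0 → (w k / w k₀)^4 = 1) {q : ℂ} (hq : q ∈ QPSK) :
    FibS w k₀ (-I * q) ⊆ FullBox w (q * (I - 1) / w k₀) := by
  have hq4 : q^4 = -1 := mem_QPSK_iff.1 hq
  intro s hsf
  rw [FibS, Fintype.mem_piFinset] at hsf
  rw [mem_FullBox]
  intro k
  have hsf := hsf k
  by_cases hwk : w k = 0
  · rw [if_neg (by simpa using hwk)] at hsf
    exact ⟨hsf, by simpa [hwk] using hsf⟩
  · rw [if_pos hwk, Finset.mem_singleton] at hsf
    have hρ4 : (w k / w k₀)^4 = 1 := hR k hwk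
    have hQ : s k ∈ QPSK := by
      rw [hsf, mem_QPSK_iff, mul_pow, mul_pow, neg_I_pow4, hq4, hρ4]
      norm_num
    refine ⟨hQ, ?_⟩
    have he : s k + (q * (I - 1) / w k₀) * w k = -(q * (w k / w k₀)) := by
      rw [hsf]; ring
    rw [he, mem_QPSK_iff,
      show (-(q * (w k / w k₀)))^4 = q^4 * (w k / w k₀)^4 by ring, hq4, hρ4]
    norm_num

lemma FibS_card {w : Fin D → ℂ} (k₀ : Fin D) (q : ℂ) :
    (FibS w k₀ q).card = 4 ^ (univ.filter fun k : Fin D => ¬ w k ≠ 0).card := by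
  rw [FibS, Fintype.card_piFinset]
  rw [← Finset.prod_filter_mul_prod_filter_not univ (fun k => w k ≠ 0)]
  have h1 : ∀ k ∈ (univ.filter fun k : Fin D => w k ≠ 0),
      (if w k ≠ 0 then ({q * (w k / w k₀)} : Finset ℂ) else QPSK).card = 1 := by
    intro k hk
    rw [Finset.mem_filter] at hk
    rw [if_pos hk.2, Finset.card_singleton]
  have h2 : ∀ k ∈ (univ.filter fun k : Fin D => ¬ w k ≠ 0),
      (if w k ≠ 0 then ({q * (w k / w k₀)} : Finset ℂ) else QPSK).card = 4 := by
    intro k hk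
    rw [Finset.mem_filter] at hk
    rw [if_neg hk.2, QPSK_card]
  rw [Finset.prod_congr rfl h1, Finset.prod_congr rfl h2, Finset.prod_const,
    Finset.prod_const, one_pow, one_mul]

lemma FibS_disjoint {w : Fin D → ℂ} {k₀ : Fin D} (hk₀ : w k₀ ≠ 0) {q q' : ℂ}
    (hne : q ≠ q') : Disjoint (FibS w k₀ q) (FibS w k₀ q') := by
  rw [Finset.disjoint_left]
  intro s hs hs'
  rw [FibS, Fintype.mem_piFinset] at hs hs'
  have h1 := hs k₀
  have h2 := hs' k₀
  rw [if_pos hk₀, Finset.mem_singleton] at h1 h2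
  apply hne
  have : q * (w k₀ / w k₀) = q' * (w k₀ / w k₀) := h1 ▸ h2 ▸ rfl
  rwa [div_self hk₀, mul_one, mul_one] at this

theorem count_bad (w : Fin D → ℂ) (hw : w ≠ 0) :
    ((qpskVecs D).filter (fun s => ∃ c : ℂ, c ≠ 0 ∧ ∀ k, s k + c * w k ∈ QPSK)).card
      ≤ 4 * (2 ^ zeroNorm w - 1) * 4 ^ (D - zeroNorm w) := by
  classical
  obtain ⟨k₀, hk₀⟩ : ∃ k, w k ≠ 0 := by
    by_contra h
    push_neg at h
    exact hw (funext h)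
  set L := (univ.filter fun k : Fin D => w k ≠ 0).card with hL
  set Lc := (univ.filter fun k : Fin D => ¬ w k ≠ 0).card with hLc
  have hLL : zeroNorm w = L := rfl
  have hsplit : L + Lc = D := by
    rw [hL, hLc]
    rw [Finset.card_filter_add_card_filter_not]
    exact Fintype.card_fin D
  have hL1 : 1 ≤ L := by
    rw [hL]
    apply Finset.card_pos.2
    exact ⟨k₀, by simp [hk₀]⟩
  have h2L : 2 ≤ 2 ^ L := by
    calc 2 = 2^1 := rfl
    _ ≤ 2^L := Nat.pow_le_pow_right (by norm_num) hL1
  rw [hLL, show D - L = Lc from by omega]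
  -- the set of bad vectors
  set Bad := ((qpskVecs D).filter
    (fun s => ∃ c : ℂ, c ≠ 0 ∧ ∀ k, s k + c * w k ∈ QPSK)) with hBad
  have hBadSub : Bad ⊆ (QPSK.biUnion fun q => FullBox w (q * (I - 1) / w k₀)) ∪
      (QPSK.biUnion fun q => FullBox w (-2 * q / w k₀)) := by
    intro s hsB
    rw [hBad, Finset.mem_filter] at hsB
    obtain ⟨hsv, c, hc0, hc⟩ := hsB
    rw [qpskVecs, Fintype.mem_piFinset] at hsv
    exact bad_subset hk₀ hsv hc0 hc
  by_cases hR : ∀ k, w k ≠ 0 → (w k / w k₀)^4 = 1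
  · -- all-roots case: bad ⊆ union of edge boxes, use the overlap argument
    set X := QPSK.biUnion (FibS w k₀) with hX
    have hXcard : X.card ≤ 4 * 4 ^ Lc := by
      calc X.card ≤ ∑ q ∈ QPSK, (FibS w k₀ q).card := Finset.card_biUnion_le
      _ = 4 * 4 ^ Lc := by
          rw [Finset.sum_congr rfl (fun q _ => FibS_card k₀ q), Finset.sum_const,
            QPSK_card, smul_eq_mul]
    have hBadE : Bad ⊆ QPSK.biUnion fun q => FullBox w (q * (I - 1) / w k₀) := by
      intro s hs
      have := hBadSub hs
      rw [Finset.mem_union] at this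
      rcases this with h|h
      · exact h
      · rw [Finset.mem_biUnion] at h ⊢
        obtain ⟨q, hq, hmem⟩ := h
        exact ⟨q, hq, DBox_subset_EBox hk₀ hR hq hmem⟩
    have hcover : Bad ⊆
        (QPSK.biUnion fun q => (FullBox w (q * (I - 1) / w k₀)) \ X) ∪ X := by
      intro s hs
      have hE := hBadE hs
      rw [Finset.mem_biUnion] at hE
      obtain ⟨q, hq, hmem⟩ := hE
      by_cases hsX : s ∈ X
      · exact Finset.mem_union_right _ hsX
      · exact Finset.mem_union_left _ (Finset.mem_biUnion.2 ⟨q, hq, Finset.mem_sdiff.2 ⟨hmem, hsX⟩⟩)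
    have hEboxX : ∀ q ∈ QPSK, ((FullBox w (q * (I - 1) / w k₀)) \ X).card
        ≤ 2 ^ L * 4 ^ Lc - 2 * 4 ^ Lc := by
      intro q hq
      have hq0 : q ≠ 0 := QPSK_ne_zero hq
      have hc0 : q * (I - 1) / w k₀ ≠ 0 :=
        div_ne_zero (mul_ne_zero hq0 hIm1_ne) hk₀
      have hub : (FullBox w (q * (I - 1) / w k₀)).card ≤ 2 ^ L * 4 ^ Lc :=
        FullBox_card_le_gen hc0
      have hq' : -I * q ∈ QPSK := QPSK_mul_root hq neg_I_pow4
      have hsub1 : FibS w k₀ q ∪ FibS w k₀ (-I * q) ⊆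
          (FullBox w (q * (I - 1) / w k₀)) ∩ X := by
        apply Finset.union_subset
        · exact Finset.subset_inter (FibS_subset_EBox hk₀ hR hq)
            (Finset.subset_biUnion_of_mem _ hq)
        · exact Finset.subset_inter (FibS_subset_EBox' hk₀ hR hq)
            (Finset.subset_biUnion_of_mem _ hq')
      have hqne : q ≠ -I * q := by
        intro h
        have : q * (1 + I) = 0 := by linear_combination h
        rcases mul_eq_zero.1 this with h'|h'
        · exact hq0 h'
        · have := congrArg Complex.im h'
          simp at this
      have hlb : 2 * 4 ^ Lc ≤ ((FullBox w (q * (I - 1) / w k₀)) ∩ X).card := by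
        calc 2 * 4 ^ Lc = (FibS w k₀ q ∪ FibS w k₀ (-I * q)).card := by
              rw [Finset.card_union_of_disjoint (FibS_disjoint hk₀ hqne),
                FibS_card, FibS_card]
              ring
        _ ≤ _ := Finset.card_le_card hsub1
      have hid := Finset.card_inter_add_card_sdiff
        (FullBox w (q * (I - 1) / w k₀)) X
      omega
    calc Bad.card ≤ ((QPSK.biUnion fun q => (FullBox w (q * (I - 1) / w k₀)) \ X) ∪ X).card :=
          Finset.card_le_card hcover
    _ ≤ (QPSK.biUnion fun q => (FullBox w (q * (I - 1) / w k₀)) \ X).card + X.card :=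
          Finset.card_union_le _ _
    _ ≤ (∑ q ∈ QPSK, ((FullBox w (q * (I - 1) / w k₀)) \ X).card) + 4 * 4 ^ Lc := by
          exact Nat.add_le_add Finset.card_biUnion_le hXcard
    _ ≤ (∑ _q ∈ QPSK, (2 ^ L * 4 ^ Lc - 2 * 4 ^ Lc)) + 4 * 4 ^ Lc := by
          exact Nat.add_le_add_right (Finset.sum_le_sum hEboxX) _
    _ = 4 * (2 ^ L * 4 ^ Lc - 2 * 4 ^ Lc) + 4 * 4 ^ Lc := by
          rw [Finset.sum_const, QPSK_card, smul_eq_mul]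
    _ ≤ 4 * (2 ^ L - 1) * 4 ^ Lc := by
          have e1 : 2 ^ L * 4 ^ Lc - 2 * 4 ^ Lc = (2 ^ L - 2) * 4 ^ Lc := by
            rw [Nat.sub_mul]
          rw [e1]
          have e2 : 4 * ((2 ^ L - 2) * 4 ^ Lc) + 4 * 4 ^ Lc
              = (4 * (2 ^ L - 2) + 4) * 4 ^ Lc := by ring
          rw [e2]
          apply Nat.mul_le_mul_right
          omega
  · -- non-roots case
    push_neg at hR
    obtain ⟨k₁, hk₁, hρ4⟩ := hR
    set ρ := w k₁ / w k₀ with hρdef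
    have hρ0 : ρ ≠ 0 := div_ne_zero hk₁ hk₀
    have key : ∀ q ∈ QPSK,
        (FullBox w (q * (I - 1) / w k₀)).card + (FullBox w (-2 * q / w k₀)).card
          ≤ 2 ^ (L - 1) * 4 ^ Lc := by
      intro q hq
      have hq4 : q^4 = -1 := mem_QPSK_iff.1 hq
      have hq0 : q ≠ 0 := QPSK_ne_zero hq
      have hcE : q * (I - 1) / w k₀ ≠ 0 := div_ne_zero (mul_ne_zero hq0 hIm1_ne) hk₀
      have hcD : -2 * q / w k₀ ≠ 0 := div_ne_zero (mul_ne_zero (by norm_num) hq0) hk₀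
      have heE : (q * (I - 1) / w k₀) * w k₁ = q * (I - 1) * ρ := by
        rw [hρdef]; ring
      have heD : (-2 * q / w k₀) * w k₁ = -2 * q * ρ := by
        rw [hρdef]; ring
      by_cases hρ4' : ρ^4 = -4
      · -- diagonal boxes die at k₁, edge boxes have a singleton coordinate
        have hDzero : (FullBox w (-2 * q / w k₀)).card = 0 := by
          apply FullBox_card_zero k₁
          rw [heD]
          exact TS_E hq4 hρ0 hρ4'
        have hEbound : (FullBox w (q * (I - 1) / w k₀)).card ≤ 2 ^ (L - 1) * 4 ^ Lc := by
          apply FullBox_card_le_one hcE k₁ hk₁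
          rw [heE]
          exact TS_A hq4 hρ0 hρ4
        omega
      · -- edge boxes die at k₁, diagonal boxes have a singleton coordinate at k₀
        have hEzero : (FullBox w (q * (I - 1) / w k₀)).card = 0 := by
          apply FullBox_card_zero k₁
          rw [heE]
          exact TS_B hq4 hρ0 hρ4 hρ4'
        have hDbound : (FullBox w (-2 * q / w k₀)).card ≤ 2 ^ (L - 1) * 4 ^ Lc := by
          apply FullBox_card_le_one hcD k₀ hk₀
          have heD0 : (-2 * q / w k₀) * w k₀ = -2 * q * 1 := by
            field_simp
          rw [heD0]
          apply le_trans (Finset.card_le_card (TS_D hq4 one_ne_zero (by norm_num)))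
          simp
        omega
    calc Bad.card ≤ ((QPSK.biUnion fun q => FullBox w (q * (I - 1) / w k₀)) ∪
        (QPSK.biUnion fun q => FullBox w (-2 * q / w k₀))).card :=
          Finset.card_le_card hBadSub
    _ ≤ (QPSK.biUnion fun q => FullBox w (q * (I - 1) / w k₀)).card +
        (QPSK.biUnion fun q => FullBox w (-2 * q / w k₀)).card :=
          Finset.card_union_le _ _
    _ ≤ (∑ q ∈ QPSK, (FullBox w (q * (I - 1) / w k₀)).card) +
        (∑ q ∈ QPSK, (FullBox w (-2 * q / w k₀)).card) :=
          Nat.add_le_add Finset.card_biUnion_le Finset.card_biUnion_le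
    _ = ∑ q ∈ QPSK, ((FullBox w (q * (I - 1) / w k₀)).card +
        (FullBox w (-2 * q / w k₀)).card) := by
          rw [Finset.sum_add_distrib]
    _ ≤ ∑ _q ∈ QPSK, 2 ^ (L - 1) * 4 ^ Lc := Finset.sum_le_sum key
    _ = 4 * (2 ^ (L - 1) * 4 ^ Lc) := by
          rw [Finset.sum_const, QPSK_card, smul_eq_mul]
    _ ≤ 4 * (2 ^ L - 1) * 4 ^ Lc := by
          have e1 : 2 ^ L = 2 * 2 ^ (L - 1) := by
            rw [← pow_succ']
            congr 1
            omega
          have e2 : 4 * (2 ^ (L - 1) * 4 ^ Lc) = (4 * 2 ^ (L-1)) * 4 ^ Lc := by ring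
          rw [e2]
          apply Nat.mul_le_mul_right
          omega

lemma eclipsed_imp_bad {U D : ℕ} (w : Fin D → ℂ) (hw : w ≠ 0)
    (S : Matrix (Fin U) (Fin D) ℂ)
    (h : EclipsedCSI S (Matrix.of fun _ : Fin 1 => w)) :
    ∃ u, ∃ c : ℂ, c ≠ 0 ∧ ∀ k, S u k + c * w k ∈ QPSK := by
  obtain ⟨St, hSt, hne, hrank⟩ := h
  set M := Matrix.fromRows (S - St) (Matrix.of fun _ : Fin 1 => w) with hM
  have hrankT : Mᵀ.rank ≤ 1 := by
    rw [Matrix.rank_transpose]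
    exact hrank
  set V := LinearMap.range (Matrix.mulVecLin Mᵀ) with hV
  have hfr : Module.finrank ℂ V ≤ 1 := hrankT
  have hwV : w ∈ V := by
    refine ⟨Pi.single (Sum.inr 0) 1, ?_⟩
    rw [Matrix.mulVecLin_apply, Matrix.mulVec_single]
    funext k
    simp [hM, Matrix.transpose_apply]
  -- the span of w equals V
  have hspan : (ℂ ∙ w) = V := by
    apply Submodule.eq_of_le_of_finrank_le
    · rw [Submodule.span_singleton_le_iff_mem]
      exact hwV
    · rw [finrank_span_singleton hw]
      exact hfr
  -- pick a row where St differs from S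
  have : ∃ u, St u ≠ S u := by
    by_contra hcon
    push_neg at hcon
    exact hne (funext hcon)
  obtain ⟨u, hu⟩ := this
  have hrow : (S - St) u ∈ V := by
    refine ⟨Pi.single (Sum.inl u) 1, ?_⟩
    rw [Matrix.mulVecLin_apply, Matrix.mulVec_single]
    funext k
    simp [hM, Matrix.transpose_apply]
  rw [← hspan, Submodule.mem_span_singleton] at hrow
  obtain ⟨a, ha⟩ := hrow
  have ha0 : a ≠ 0 := by
    intro h0
    rw [h0, zero_smul] at ha
    apply hu
    funext k
    have := congrFun ha k
    simp only [Matrix.sub_apply, Pi.zero_apply] at this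
    linear_combination this
  refine ⟨u, -a, neg_ne_zero.2 ha0, fun k => ?_⟩
  have hk := congrFun ha k
  simp only [Matrix.sub_apply, Pi.smul_apply, smul_eq_mul] at hk
  have : S u k + (-a) * w k = St u k := by linear_combination -hk
  rw [this]
  exact hSt u k

lemma aux_pow (n : ℕ) (hn : 1 ≤ n) : ((2:ℝ)^n - 1) ≤ (4:ℝ)^(n-1) := by
  rcases Nat.eq_or_lt_of_le hn with h|h
  · rw [← h]
    norm_num
  · have h2 : n ≤ 2 * (n - 1) := by omega
    have h3 : (2:ℝ) ^ n ≤ (2:ℝ) ^ (2 * (n-1)) := pow_le_pow_right₀ (by norm_num) h2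
    have e : (4:ℝ) ^ (n-1) = (2:ℝ) ^ (2 * (n-1)) := by
      rw [pow_mul]
      norm_num
    rw [e]
    linarith


end QJ
end QJAux

open QJ Complex Finset Matrix in
/-- The probability that a single-antenna jammer with transmit vector `w`
is eclipsed (perfect-CSI sense) is at most `p_e(w)`. -/
theorem stmt1 (U D : ℕ) (hU : 0 < U) (hD : 0 < D) (w : Fin D → ℂ) :
    probM U D (fun S_D => EclipsedCSI S_D (Matrix.of fun _ : Fin 1 => w)) ≤
      (if w = 0 then (1 : ℝ)
       else 1 - (1 - ((2 : ℝ) ^ (zeroNorm w) - 1) / (4 : ℝ) ^ (zeroNorm w - 1)) ^ U) := by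
  have hMcard : (qpskMatrices U D).card = (4 ^ D) ^ U := by
    rw [qpskMatrices]
    change (Fintype.piFinset fun _ : Fin U => Fintype.piFinset fun _ : Fin D => QPSK :
      Finset (Fin U → Fin D → ℂ)).card = _
    rw [Fintype.card_piFinset]
    rw [Finset.prod_congr rfl (fun u _ => by rw [Fintype.card_piFinset]
      : ∀ u ∈ univ, (Fintype.piFinset fun _ : Fin D => QPSK).card = ∏ _k : Fin D, QPSK.card)]
    simp [QPSK_card, Finset.prod_const]
  by_cases hw : w = 0
  · rw [if_pos hw]
    rw [probM]
    apply div_le_one_of_le₀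
    · exact_mod_cast Nat.cast_le.2 (Finset.card_filter_le _ _)
    · positivity
  · rw [if_neg hw]
    set L := zeroNorm w with hL

    have hL1 : 1 ≤ L := by
      rw [hL, zeroNorm]
      apply Finset.card_pos.2
      obtain ⟨k, hk⟩ : ∃ k, w k ≠ 0 := by
        by_contra h
        push_neg at h
        exact hw (funext h)
      exact ⟨k, by simp [hk]⟩
    have hLD : L ≤ D := by
      rw [hL, zeroNorm]
      calc (Finset.univ.filter fun k => w k ≠ 0).card ≤ Finset.univ.card :=
            Finset.card_filter_le _ _
      _ = D := Fintype.card_fin D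
    -- row-level counting
    set BadP : (Fin D → ℂ) → Prop := fun s => ∃ c : ℂ, c ≠ 0 ∧ ∀ k, s k + c * w k ∈ QPSK
      with hBadP
    set b := ((qpskVecs D).filter BadP).card with hb
    set g := ((qpskVecs D).filter (fun s => ¬ BadP s)).card with hg
    have hVcard : (qpskVecs D).card = 4 ^ D := by
      rw [qpskVecs, Fintype.card_piFinset]
      simp [QPSK_card, Finset.prod_const]
    have hbg : b + g = 4 ^ D := by
      rw [hb, hg, Finset.card_filter_add_card_filter_not, hVcard]
    have hble : b ≤ 4 * (2 ^ L - 1) * 4 ^ (D - L) := count_bad w hw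
    -- matrix-level counting
    have hGood : ((qpskMatrices U D).filter
        (fun S => ∀ u, ¬ BadP (S u))).card = g ^ U := by
      have : (qpskMatrices U D).filter (fun S => ∀ u, ¬ BadP (S u)) =
          Fintype.piFinset fun _ : Fin U => (qpskVecs D).filter (fun s => ¬ BadP s) := by
        ext S
        rw [Finset.mem_filter, qpskMatrices]
        erw [Fintype.mem_piFinset, Fintype.mem_piFinset]
        constructor
        · rintro ⟨h1, h2⟩ u
          rw [Finset.mem_filter]
          exact ⟨h1 u, h2 u⟩
        · intro h
          refine ⟨fun u => (Finset.mem_filter.1 (h u)).1, fun u => (Finset.mem_filter.1 (h u)).2⟩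
      rw [this]
      change (Fintype.piFinset fun _ : Fin U => (qpskVecs D).filter (fun s => ¬ BadP s) :
        Finset (Fin U → Fin D → ℂ)).card = _
      rw [Fintype.card_piFinset]
      simp [hg, Finset.prod_const]
    have hEcard : ((qpskMatrices U D).filter
        (fun S_D => EclipsedCSI S_D (Matrix.of fun _ : Fin 1 => w))).card
          ≤ (4 ^ D) ^ U - g ^ U := by
      have h1 : ((qpskMatrices U D).filter
          (fun S_D => EclipsedCSI S_D (Matrix.of fun _ : Fin 1 => w))) ⊆
          ((qpskMatrices U D).filter (fun S => ∃ u, BadP (S u))) := by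
        apply Finset.monotone_filter_right
        intro S _ hS
        exact eclipsed_imp_bad w hw S hS
      have h2 := Finset.card_filter_add_card_filter_not
        (s := qpskMatrices U D) (p := fun S => ∃ u, BadP (S u))
      have h3 : (qpskMatrices U D).filter (fun S => ¬ ∃ u, BadP (S u)) =
          (qpskMatrices U D).filter (fun S => ∀ u, ¬ BadP (S u)) := by
        apply Finset.filter_congr
        intro S _
        push_neg
        rfl
      rw [h3, hGood, hMcard] at h2
      have h4 := Finset.card_le_card h1
      have h5 : ((qpskMatrices U D).filter
          (fun S_D => EclipsedCSI S_D (Matrix.of fun _ : Fin 1 => w))).card + g ^ U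
            ≤ (4 ^ D) ^ U := by
        rw [← h2]
        exact Nat.add_le_add_right h4 _
      exact Nat.le_sub_of_add_le h5
    -- real arithmetic
    have hgle : g ≤ 4 ^ D := Nat.le.intro ((Nat.add_comm b g) ▸ hbg)
    have h4D : (0:ℝ) < (4:ℝ) ^ D := by positivity
    have h4DU : (0:ℝ) < ((4:ℝ) ^ D) ^ U := by positivity
    have hprob : probM U D (fun S_D => EclipsedCSI S_D (Matrix.of fun _ : Fin 1 => w))
        ≤ 1 - ((g:ℝ) / 4 ^ D) ^ U := by
      rw [probM, hMcard]
      rw [div_le_iff₀ (by positivity)]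
      have hgU : g ^ U ≤ (4 ^ D) ^ U := Nat.pow_le_pow_left hgle U
      have hcast : (((qpskMatrices U D).filter
          (fun S_D => EclipsedCSI S_D (Matrix.of fun _ : Fin 1 => w))).card : ℝ)
            ≤ ((4:ℝ) ^ D) ^ U - ((g:ℝ)) ^ U := by
        calc (((qpskMatrices U D).filter
            (fun S_D => EclipsedCSI S_D (Matrix.of fun _ : Fin 1 => w))).card : ℝ)
            ≤ (((4 ^ D) ^ U - g ^ U : ℕ) : ℝ) := Nat.cast_le.2 hEcard
        _ = ((4:ℝ) ^ D) ^ U - ((g:ℝ)) ^ U := by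
            rw [Nat.cast_sub hgU]
            push_cast
            ring
      have e : (1 - ((g:ℝ) / 4 ^ D) ^ U) * (((4:ℝ) ^ D) ^ U)
          = ((4:ℝ) ^ D) ^ U - ((g:ℝ)) ^ U := by
        rw [div_pow, sub_mul, one_mul, div_mul_cancel₀]
        positivity
      push_cast
      rw [e]
      exact hcast
    have hyx : 1 - ((2:ℝ) ^ L - 1) / (4:ℝ) ^ (L - 1) ≤ (g:ℝ) / 4 ^ D := by
      rw [le_div_iff₀ h4D]
      have hkey : (4:ℝ) ^ D = 4 * 4 ^ (D - L) * 4 ^ (L - 1) := by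
        have e0 : (4:ℝ) ^ D = 4 ^ (1 + (D - L) + (L - 1)) := by
          congr 1
          clear * - hL1 hLD
          omega
        rw [e0, pow_add, pow_add, pow_one]
      have e : ((2:ℝ) ^ L - 1) / (4:ℝ) ^ (L - 1) * 4 ^ D
          = ((2:ℝ) ^ L - 1) * (4 * 4 ^ (D - L)) := by
        rw [hkey]
        field_simp
      rw [sub_mul, one_mul, e]
      have hgl : (4:ℝ) ^ D - 4 * ((2:ℝ) ^ L - 1) * 4 ^ (D - L) ≤ (g:ℝ) := by
        have h2L : 1 ≤ 2 ^ L := Nat.one_le_two_pow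
        have hcast1 : ((4 * (2 ^ L - 1) * 4 ^ (D - L) : ℕ) : ℝ)
            = 4 * ((2:ℝ) ^ L - 1) * 4 ^ (D - L) := by
          push_cast [Nat.cast_sub h2L]
          ring
        have hb' : (b:ℝ) ≤ 4 * ((2:ℝ) ^ L - 1) * 4 ^ (D - L) := by
          rw [← hcast1]
          exact_mod_cast hble
        have hbg' : (b:ℝ) + (g:ℝ) = (4:ℝ) ^ D := by exact_mod_cast hbg
        linarith
      linarith
    have hy0 : 0 ≤ 1 - ((2:ℝ) ^ L - 1) / (4:ℝ) ^ (L - 1) := by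
      have h1 : ((2:ℝ) ^ L - 1) ≤ (4:ℝ) ^ (L - 1) := aux_pow L hL1
      have h2 : (0:ℝ) < (4:ℝ) ^ (L-1) := by positivity
      rw [sub_nonneg, div_le_one h2]
      exact h1
    have hpow : (1 - ((2:ℝ) ^ L - 1) / (4:ℝ) ^ (L - 1)) ^ U ≤ ((g:ℝ) / 4 ^ D) ^ U :=
      pow_le_pow_left₀ hy0 hyx U
    linarith
end

section
/- Let U, D ≥ 1, T ≥ U, and let S_T ∈ ℂ^{U×T} have full rank U with right pseudoinverse S_T⁺ = S_Tᴴ(S_T S_Tᴴ)⁻¹. Suppose a single-antenna jammer (I = 1) transmits w_T ∈ ℂ^T equal to the first row of S_T (transposed) during the pilot phase and an arbitrary fixed w_D ∈ S^D during the data phase. If S_D is drawn uniformly at random from S^{U×D}, then the jammer is eclipsed (channel-estimation sense) whenever w_Dᵀ differs from the first row of S_D; consequently, the probability that the jammer is eclipsed is at least 1 − 4^{−D}. -/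
open scoped BigOperators
open scoped Classical

lemma QPSK_card : QPSK.card = 4 := by
  have hne : ∀ a b : ℂ, a ≠ b → a / (Real.sqrt 2 : ℂ) ≠ b / (Real.sqrt 2 : ℂ) := by
    have hs : (Real.sqrt 2 : ℂ) ≠ 0 := by norm_cast; positivity
    intro a b hab h
    exact hab (by field_simp at h; exact h)
  rw [QPSK, Finset.card_insert_of_notMem, Finset.card_insert_of_notMem,
    Finset.card_insert_of_notMem, Finset.card_singleton]
  · simp only [Finset.mem_singleton]
    exact hne _ _ (by norm_num [Complex.ext_iff])
  · simp only [Finset.mem_insert, Finset.mem_singleton, not_or]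
    exact ⟨hne _ _ (by norm_num [Complex.ext_iff]), hne _ _ (by norm_num [Complex.ext_iff])⟩
  · simp only [Finset.mem_insert, Finset.mem_singleton, not_or]
    exact ⟨hne _ _ (by norm_num [Complex.ext_iff]), hne _ _ (by norm_num [Complex.ext_iff]),
      hne _ _ (by norm_num [Complex.ext_iff])⟩

open scoped ComplexOrder in
lemma pinv_right {U T : ℕ} (S_T : Matrix (Fin U) (Fin T) ℂ) (hST : S_T.rank = U) :
    S_T * pinvWide S_T = 1 := by
  have hr : (S_T * S_T.conjTranspose).rank = Fintype.card (Fin U) := by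
    rw [Matrix.rank_self_mul_conjTranspose, hST, Fintype.card_fin]
  have htop : LinearMap.range (S_T * S_T.conjTranspose).mulVecLin = ⊤ := by
    apply Submodule.eq_top_of_finrank_eq
    rw [Module.finrank_fintype_fun_eq_card]
    exact hr
  have hsurj : Function.Surjective (S_T * S_T.conjTranspose).mulVec := by
    intro y
    obtain ⟨x, hx⟩ := LinearMap.range_eq_top.mp htop y
    exact ⟨x, hx⟩
  have hunit : IsUnit (S_T * S_T.conjTranspose) := Matrix.mulVec_surjective_iff_isUnit.mp hsurj
  have hdet : IsUnit (S_T * S_T.conjTranspose).det :=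
    (Matrix.isUnit_iff_isUnit_det _).mp hunit
  rw [pinvWide, ← Matrix.mul_assoc, Matrix.mul_nonsing_inv _ hdet]

lemma eclipse_construct {U D T : ℕ} (hU : 0 < U)
    (S_T : Matrix (Fin U) (Fin T) ℂ) (hST : S_T.rank = U)
    (w_D : Fin D → ℂ) (hwD : ∀ k, w_D k ∈ QPSK)
    (W_T : Matrix (Fin 1) (Fin T) ℂ) (hWT : W_T = Matrix.of fun _ : Fin 1 => S_T ⟨0, hU⟩)
    (S_D : Matrix (Fin U) (Fin D) ℂ) (hSD : ∀ i j, S_D i j ∈ QPSK)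
    (hne : w_D ≠ S_D ⟨0, hU⟩) :
    EclipsedCE S_T S_D W_T (Matrix.of fun _ : Fin 1 => w_D) := by
  set z : Fin U := ⟨0, hU⟩
  refine ⟨Matrix.updateRow S_D z w_D, ?_, ?_, ?_⟩
  · intro i j
    rw [Matrix.updateRow_apply]
    split
    · exact hwD j
    · exact hSD i j
  · intro h
    exact hne (by rw [← h, Matrix.updateRow_self])
  · set St := Matrix.updateRow S_D z w_D with hSt
    have hmul : W_T * pinvWide S_T * St = Matrix.of fun _ : Fin 1 => w_D := by
      have h1 : W_T * pinvWide S_T * St = W_T * (pinvWide S_T * St) := Matrix.mul_assoc _ _ _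
      ext i j
      rw [h1, hWT]
      have : (Matrix.of (fun _ : Fin 1 => S_T z) * (pinvWide S_T * St)) i j
          = (S_T * (pinvWide S_T * St)) z j := by
        simp [Matrix.mul_apply]
      rw [this, ← Matrix.mul_assoc, pinv_right S_T hST, Matrix.one_mul]
      simp [hSt, Matrix.updateRow_self]
    rw [hmul]
    have hz : (Matrix.of fun _ : Fin 1 => w_D) - (Matrix.of fun _ : Fin 1 => w_D)
        = (0 : Matrix (Fin 1) (Fin D) ℂ) := sub_self _
    rw [hz]
    -- express as a product with a 1-column matrix
    set A : Matrix (Fin U ⊕ Fin 1) (Fin 1) ℂ :=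
      fun i _ => if i = Sum.inl z then 1 else 0 with hA
    set B : Matrix (Fin 1) (Fin D) ℂ := fun _ j => S_D z j - w_D j with hB
    have hM : Matrix.fromRows (S_D - St) (0 : Matrix (Fin 1) (Fin D) ℂ) = A * B := by
      ext i j
      cases i with
      | inl a =>
        by_cases ha : a = z
        · subst ha
          rw [Matrix.mul_apply]
          simp [Matrix.mul_apply, hA, hB, hSt, Matrix.updateRow_self, Fin.sum_univ_one]
        · rw [Matrix.mul_apply]
          simp [Matrix.mul_apply, hA, hB, hSt, Matrix.updateRow_ne ha, ha, Fin.sum_univ_one]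
      | inr b =>
        rw [Matrix.mul_apply]
        simp [Matrix.mul_apply, hA, Fin.sum_univ_one]
    rw [hM]
    calc (A * B).rank ≤ B.rank := Matrix.rank_mul_le_right A B
      _ ≤ Fintype.card (Fin 1) := Matrix.rank_le_card_height B
      _ = 1 := Fintype.card_fin 1

lemma nat_key : ∀ n m a b : ℕ, a + b = n → b ≤ m → n - m ≤ a := by
  intro n m a b h1 h2; omega

lemma qpskVecs_card (D : ℕ) : (qpskVecs D).card = 4 ^ D := by
  rw [qpskVecs, Fintype.card_piFinset_const, QPSK_card]


/-- If a single-antenna jammer transmits the first pilot row during the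
pilot phase and some `w_D ∈ S^D` during the data phase, then it is eclipsed
(channel-estimation sense) whenever `w_Dᵀ` differs from the first row of `S_D`;
consequently, it eclipses with probability at least `1 − 4^{−D}`. -/
theorem stmt3 (U D T : ℕ) (hU : 0 < U) (hD : 0 < D) (hTU : U ≤ T)
    (S_T : Matrix (Fin U) (Fin T) ℂ) (hST : S_T.rank = U)
    (w_D : Fin D → ℂ) (hwD : ∀ k, w_D k ∈ QPSK)
    (W_T : Matrix (Fin 1) (Fin T) ℂ) (hWT : W_T = Matrix.of fun _ : Fin 1 => S_T ⟨0, hU⟩) :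
    (∀ S_D : Matrix (Fin U) (Fin D) ℂ, (∀ i j, S_D i j ∈ QPSK) →
        w_D ≠ S_D ⟨0, hU⟩ →
        EclipsedCE S_T S_D W_T (Matrix.of fun _ : Fin 1 => w_D)) ∧
    1 - ((4 : ℝ) ^ D)⁻¹ ≤
      probM U D (fun S_D => EclipsedCE S_T S_D W_T (Matrix.of fun _ : Fin 1 => w_D)) := by
  have part1 : ∀ S_D : Matrix (Fin U) (Fin D) ℂ, (∀ i j, S_D i j ∈ QPSK) →
      w_D ≠ S_D ⟨0, hU⟩ → EclipsedCE S_T S_D W_T (Matrix.of fun _ : Fin 1 => w_D) :=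
    fun S_D h1 h2 => eclipse_construct hU S_T hST w_D hwD W_T hWT S_D h1 h2
  refine ⟨part1, ?_⟩
  set E : Matrix (Fin U) (Fin D) ℂ → Prop :=
    fun S_D => EclipsedCE S_T S_D W_T (Matrix.of fun _ : Fin 1 => w_D) with hE
  set z : Fin U := ⟨0, hU⟩
  -- bad events are contained in {S_D | S_D z = w_D}
  have hsub : (qpskMatrices U D).filter (fun S_D => ¬ E S_D) ⊆
      (qpskMatrices U D).filter (fun S_D => S_D z = w_D) := by
    intro M hM
    rw [Finset.mem_filter] at hM ⊢
    obtain ⟨hmem, hnE⟩ := hM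
    refine ⟨hmem, ?_⟩
    by_contra hne'
    have hent : ∀ i j, M i j ∈ QPSK := by
      intro i j
      have := Fintype.mem_piFinset.mp hmem i
      exact Fintype.mem_piFinset.mp this j
    exact hnE (part1 M hent (fun h => hne' h.symm))
  have hwmem : w_D ∈ qpskVecs D := Fintype.mem_piFinset.mpr hwD
  have hbadcard : ((qpskMatrices U D).filter (fun S_D => S_D z = w_D)).card
      = (4 ^ D) ^ (U - 1) := by
    have := Fintype.card_filter_piFinset_const_eq_of_mem
      (s := qpskVecs D) (i := z) (x := w_D) hwmem
    rw [Fintype.card_fin] at this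
    rw [← qpskVecs_card D, ← this]
    congr 1
  have htotal : (qpskMatrices U D).card = (4 ^ D) ^ U := by
    rw [qpskMatrices]
    exact (Fintype.card_piFinset_const (qpskVecs D) U).trans (by rw [qpskVecs_card])
  have hsum : ((qpskMatrices U D).filter E).card
      + ((qpskMatrices U D).filter (fun S_D => ¬ E S_D)).card
      = (qpskMatrices U D).card :=
    Finset.card_filter_add_card_filter_not (p := E)
  have hbad_le : ((qpskMatrices U D).filter (fun S_D => ¬ E S_D)).card ≤ (4 ^ D) ^ (U - 1) :=
    by
    rw [← hbadcard]; exact Finset.card_le_card hsub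
  have hgood : (4 ^ D) ^ U - (4 ^ D) ^ (U - 1) ≤ ((qpskMatrices U D).filter E).card := by
    exact nat_key _ _ _ _ (by rw [← htotal]; exact hsum) hbad_le
  -- pass to reals
  set x : ℝ := (4 : ℝ) ^ D with hx
  have hxpos : 0 < x := by positivity
  have hpow : x ^ (U - 1) * x = x ^ U := by
    rw [← pow_succ, Nat.sub_add_cancel hU]
  rw [probM, htotal]
  have hgoodR : x ^ U - x ^ (U - 1) ≤ (((qpskMatrices U D).filter E).card : ℝ) := by
    have h1 : ((4 ^ D) ^ (U - 1) : ℕ) ≤ ((4 ^ D) ^ U : ℕ) :=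
      Nat.pow_le_pow_right (by positivity) (Nat.sub_le U 1)
    calc x ^ U - x ^ (U - 1)
        = (((4 ^ D) ^ U - (4 ^ D) ^ (U - 1) : ℕ) : ℝ) := by
          rw [Nat.cast_sub h1]; push_cast [hx]; ring
      _ ≤ _ := by exact_mod_cast Nat.cast_le.mpr hgood
  have hNcast : (((4 ^ D) ^ U : ℕ) : ℝ) = x ^ U := by push_cast [hx]; ring
  rw [hNcast]
  rw [le_div_iff₀ (by positivity)]
  calc (1 - ((4:ℝ) ^ D)⁻¹) * x ^ U = x ^ U - x ^ (U - 1) := by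
        rw [sub_mul, one_mul, ← hx, ← hpow]
        field_simp
      _ ≤ _ := hgoodR
end

section
/- Fix S_D ∈ S^{U×D} and w ∈ ℂ^D (single-antenna jammer, I = 1). The jammer is eclipsed (perfect-CSI sense), i.e., there exists S̃ ∈ S^{U×D} with S̃ ≠ S_D such that the (U+1)×D matrix obtained by stacking S_D − S̃ on top of wᵀ has rank at most 1, if and only if there exist an index u ∈ {1, …, U} and a vector s̃ ∈ S^D with s̃ ≠ s_u (where s_uᵀ denotes the u-th row of S_D) such that s̃ − s_u is collinear with w. -/
open scoped BigOperators
open scoped Classical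

/-- A single-antenna jammer with transmit vector `w` is eclipsed
(perfect-CSI sense) iff for some UE index `u` there is `s̃ ∈ S^D`, `s̃ ≠ s_u`,
with `s̃ − s_u` collinear with `w`. -/
theorem stmt9 (U D : ℕ) (hU : 0 < U) (hD : 0 < D)
    (S_D : Matrix (Fin U) (Fin D) ℂ) (hSD : ∀ i j, S_D i j ∈ QPSK) (w : Fin D → ℂ) :
    EclipsedCSI S_D (Matrix.of fun _ : Fin 1 => w) ↔
      ∃ u : Fin U, ∃ st : Fin D → ℂ, (∀ k, st k ∈ QPSK) ∧ st ≠ S_D u ∧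
        Collinear2 (st - S_D u) w := by
  constructor
  · rintro ⟨St, hQ, hne, hrank⟩
    have hrow : ∃ u, St u ≠ S_D u := by
      by_contra h
      push_neg at h
      exact hne (funext h)
    obtain ⟨u, hu⟩ := hrow
    refine ⟨u, St u, fun k => hQ u k, hu, ?_⟩
    -- factor the 2×D matrix through the big matrix
    set M := Matrix.fromRows (S_D - St) (Matrix.of fun _ : Fin 1 => w) with hM
    have hfac : (Matrix.of ![St u - S_D u, w]) =
        (Matrix.of ![(fun j : Fin U ⊕ Fin 1 => if j = Sum.inl u then (-1 : ℂ) else 0),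
          (fun j : Fin U ⊕ Fin 1 => if j = Sum.inr 0 then (1 : ℂ) else 0)]) * M := by
      ext i j
      fin_cases i <;>
        simp only [Matrix.mul_apply, Matrix.of_apply, Matrix.cons_val_zero,
          Matrix.cons_val_one, Matrix.head_cons, ite_mul, one_mul, neg_one_mul, zero_mul,
          Finset.sum_ite_eq, Finset.mem_univ, if_true] <;>
        simp [hM, Matrix.fromRows_apply_inl, Matrix.fromRows_apply_inr, Pi.sub_apply]
    unfold Collinear2
    rw [hfac]
    exact le_trans (Matrix.rank_mul_le_right _ _) hrank
  · rintro ⟨u, st, hQ, hne, hcol⟩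
    refine ⟨Matrix.updateRow S_D u st, ?_, ?_, ?_⟩
    · intro i j
      by_cases h : i = u
      · subst h; simp [hQ j]
      · simp [Matrix.updateRow_ne h, hSD]
    · intro h
      exact hne (by rw [← h]; simp)
    · have hfac : Matrix.fromRows (S_D - Matrix.updateRow S_D u st)
          (Matrix.of fun _ : Fin 1 => w) =
          (Matrix.of fun (j : Fin U ⊕ Fin 1) (k : Fin 2) =>
            match j with
            | Sum.inl i => if i = u then ![(-1 : ℂ), 0] k else 0
            | Sum.inr _ => ![(0 : ℂ), 1] k) * (Matrix.of ![st - S_D u, w]) := by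
        ext j k
        rcases j with i | i
        · by_cases h : i = u
          · subst h
            simp [Matrix.mul_apply, Fin.sum_univ_two, Pi.sub_apply,
              Matrix.updateRow_self, Matrix.fromRows_apply_inl]
          · simp [Matrix.mul_apply, Fin.sum_univ_two, Pi.sub_apply,
              Matrix.updateRow_ne h, h, Matrix.fromRows_apply_inl]
        · simp [Matrix.mul_apply, Fin.sum_univ_two, Matrix.fromRows_apply_inr]
      rw [hfac]
      exact le_trans (Matrix.rank_mul_le_right _ _) hcol
end

section
/- Let U, D ≥ 1, fix w ∈ ℂ^D, and let S_D be drawn uniformly at random from S^{U×D}. Then the probability that the single-antenna jammer (I = 1) with data-phase transmit vector w is eclipsed (perfect-CSI sense) equals exactly 1 − (1 − q(w))^U. -/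
open scoped BigOperators
open scoped Classical

lemma key {U D : ℕ} (w : Fin D → ℂ) (S_D : Matrix (Fin U) (Fin D) ℂ)
    (hS : ∀ i j, S_D i j ∈ QPSK) :
    EclipsedCSI S_D (Matrix.of fun _ : Fin 1 => w) ↔
      ∃ u, ∃ st : Fin D → ℂ, (∀ k, st k ∈ QPSK) ∧ st ≠ S_D u ∧
        Collinear2 (st - S_D u) w := by
  constructor
  · rintro ⟨St, hQ, hne, hrank⟩
    have hu : ∃ u, St u ≠ S_D u := by
      by_contra h; push_neg at h; exact hne (funext h)
    obtain ⟨u, hu⟩ := hu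
    refine ⟨u, St u, fun k => hQ u k, hu, ?_⟩
    set M := Matrix.fromRows (S_D - St) (Matrix.of fun _ : Fin 1 => w) with hM
    set B : Matrix (Fin 2) (Fin U ⊕ Fin 1) ℂ :=
      fun k i => Sum.elim (fun i' => if k = 0 ∧ i' = u then -1 else 0)
        (fun _ => if k = 1 then 1 else 0) i with hB
    have hBM : Matrix.of ![St u - S_D u, w] = B * M := by
      ext k j
      rw [Matrix.mul_apply, Fintype.sum_sum_type]
      fin_cases k <;>
        simp [hB, hM, Matrix.fromRows_apply_inl, Matrix.fromRows_apply_inr, Matrix.sub_apply, ite_and, mul_comm]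
    rw [Collinear2, hBM]
    exact le_trans (Matrix.rank_mul_le_right B M) hrank
  · rintro ⟨u, st, hst, hne, hcol⟩
    set St : Matrix (Fin U) (Fin D) ℂ := Function.update S_D u st with hSt
    refine ⟨St, ?_, ?_, ?_⟩
    · intro i j
      by_cases h : i = u
      · subst h; rw [hSt]; erw [Function.update_self]; exact hst j
      · rw [hSt]; erw [Function.update_of_ne h]; exact hS i j
    · intro h
      apply hne
      have := congrFun h u
      rw [hSt] at this; erw [Function.update_self] at this; exact this
    · set N : Matrix (Fin 2) (Fin D) ℂ := Matrix.of ![st - S_D u, w] with hN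
      set A : Matrix (Fin U ⊕ Fin 1) (Fin 2) ℂ :=
        fun i k => Sum.elim (fun i' => if i' = u ∧ k = 0 then -1 else 0)
          (fun _ => if k = 1 then 1 else 0) i with hA
      have hAN : Matrix.fromRows (S_D - St)
          (Matrix.of fun _ : Fin 1 => w) = A * N := by
        ext i j
        rcases i with i' | i'
        · rw [Matrix.mul_apply, Fin.sum_univ_two]
          by_cases h : i' = u
          · subst h
            simp [hA, hN, hSt, Matrix.fromRows_apply_inl, Matrix.sub_apply, Function.update_self]
            erw [Matrix.sub_apply, Function.update_self]
          · simp [hA, hN, hSt, h, Matrix.fromRows_apply_inl, Matrix.sub_apply, Function.update_of_ne h]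
            erw [Matrix.sub_apply, Function.update_of_ne h, sub_self]
        · rw [Matrix.mul_apply, Fin.sum_univ_two]
          simp [hA, hN, Matrix.fromRows_apply_inr]
      rw [hAN]
      exact le_trans (Matrix.rank_mul_le_right A N) hcol


/-- For `S_D` uniform on `S^{U×D}`, the probability that the
single-antenna jammer with transmit vector `w` is eclipsed (perfect-CSI sense)
equals exactly `1 − (1 − q(w))^U`. -/
theorem stmt11 (U D : ℕ) (hU : 0 < U) (hD : 0 < D) (w : Fin D → ℂ) :
    probM U D (fun S_D => EclipsedCSI S_D (Matrix.of fun _ : Fin 1 => w)) =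
      1 - (1 - qProb D w) ^ U := by
  classical
  set P : (Fin D → ℂ) → Prop := fun s => ∃ st : Fin D → ℂ, (∀ k, st k ∈ QPSK) ∧ st ≠ s ∧
      Collinear2 (st - s) w with hP
  set good : Finset (Fin D → ℂ) := (qpskVecs D).filter P with hgood
  set bad : Finset (Fin D → ℂ) := (qpskVecs D).filter (fun s => ¬ P s) with hbad
  have hNpos : 0 < (qpskVecs D).card := by
    apply Finset.card_pos.2
    refine ⟨fun _ => (1 + Complex.I) / (Real.sqrt 2 : ℂ), ?_⟩
    simp [qpskVecs, Fintype.mem_piFinset, QPSK]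
  have hsum : good.card + bad.card = (qpskVecs D).card :=
    Finset.card_filter_add_card_filter_not (p := P)
  -- total count
  have htot : (qpskMatrices U D).card = (qpskVecs D).card ^ U := by
    rw [qpskMatrices]
    refine (Fintype.card_piFinset _).trans ?_
    simp [qpskVecs]
  -- filter of eclipsed equals filter of ∃ u, P (row u)
  have hfe : (qpskMatrices U D).filter
        (fun S_D => EclipsedCSI S_D (Matrix.of fun _ : Fin 1 => w)) =
      (qpskMatrices U D).filter (fun S_D => ∃ u, P (S_D u)) := by
    apply Finset.filter_congr
    intro S_D hS_D
    have hS : ∀ i j, S_D i j ∈ QPSK := by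
      intro i j
      have := Fintype.mem_piFinset.1 hS_D i
      exact Fintype.mem_piFinset.1 this j
    simpa using key w S_D hS
  -- complement count
  have hbadfilter : (qpskMatrices U D).filter (fun S_D => ¬ ∃ u, P (S_D u)) =
      Fintype.piFinset (fun _ : Fin U => bad) := by
    ext M
    simp only [Finset.mem_filter, hbad, qpskVecs, not_exists]
    constructor
    · rintro ⟨h1, h2⟩
      exact Fintype.mem_piFinset.2 fun u =>
        Finset.mem_filter.2 ⟨Fintype.mem_piFinset.1 h1 u, h2 u⟩
    · intro h
      have h' := Fintype.mem_piFinset.1 h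
      exact ⟨Fintype.mem_piFinset.2 fun u => (Finset.mem_filter.1 (h' u)).1,
        fun u => (Finset.mem_filter.1 (h' u)).2⟩
  have hbadcard : ((qpskMatrices U D).filter (fun S_D => ¬ ∃ u, P (S_D u))).card
      = bad.card ^ U := by
    rw [hbadfilter]
    refine (Fintype.card_piFinset _).trans ?_
    simp
  have hsplit : ((qpskMatrices U D).filter (fun S_D => ∃ u, P (S_D u))).card
        + bad.card ^ U = (qpskVecs D).card ^ U := by
    rw [← hbadcard, ← htot]
    exact Finset.card_filter_add_card_filter_not
      (p := fun S_D : Matrix (Fin U) (Fin D) ℂ => ∃ u, P (S_D u))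
  -- now real arithmetic
  rw [probM, hfe, htot]
  have hNR : ((qpskVecs D).card : ℝ) ≠ 0 := Nat.cast_ne_zero.2 hNpos.ne'
  have hq : qProb D w = (good.card : ℝ) / ((qpskVecs D).card : ℝ) := rfl
  have hcardE : (((qpskMatrices U D).filter (fun S_D => ∃ u, P (S_D u))).card : ℝ)
      = ((qpskVecs D).card : ℝ) ^ U - (bad.card : ℝ) ^ U := by
    have := congrArg (fun n : ℕ => (n : ℝ)) hsplit
    push_cast at this
    linarith
  rw [hcardE, hq]
  have hbadR : (1 : ℝ) - (good.card : ℝ) / ((qpskVecs D).card : ℝ)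
      = (bad.card : ℝ) / ((qpskVecs D).card : ℝ) := by
    field_simp
    have := congrArg (fun n : ℕ => (n : ℝ)) hsum
    push_cast at this
    linarith
  rw [hbadR, div_pow, ← Nat.cast_pow, ← Nat.cast_pow]
  have hNU : ((qpskVecs D).card ^ U : ℝ) ≠ 0 := by positivity
  field_simp
end

section
/- Let U, D, I ≥ 1, let S_D ∈ S^{U×D}, and let W_D ∈ ℂ^{I×D} satisfy rank(W_D) < I. Then the jammer is eclipsed (perfect-CSI sense): there exists S̃ ∈ S^{U×D} with S̃ ≠ S_D such that the (U+I)×D matrix obtained by stacking S_D − S̃ on top of W_D has rank at most I. -/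
open scoped BigOperators
open scoped Classical

open Module Matrix in
lemma rank_fromRows_le' {U I D : ℕ} (A : Matrix (Fin U) (Fin D) ℂ)
    (B : Matrix (Fin I) (Fin D) ℂ) :
    (Matrix.fromRows A B).rank ≤ A.rank + B.rank := by
  rw [← Matrix.rank_transpose (Matrix.fromRows A B), Matrix.transpose_fromRows,
      ← Matrix.rank_transpose A, ← Matrix.rank_transpose B]
  have hle : LinearMap.range (Matrix.fromCols A.transpose B.transpose).mulVecLin ≤
      LinearMap.range A.transpose.mulVecLin ⊔ LinearMap.range B.transpose.mulVecLin := by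
    rintro x ⟨v, rfl⟩
    have hv : v = Sum.elim (v ∘ Sum.inl) (v ∘ Sum.inr) := by
      ext (a | b) <;> rfl
    have h2 : (Matrix.fromCols A.transpose B.transpose).mulVecLin v
        = A.transpose *ᵥ (v ∘ Sum.inl) + B.transpose *ᵥ (v ∘ Sum.inr) := by
      conv_lhs => rw [Matrix.mulVecLin_apply, hv, Matrix.fromCols_mulVec_sumElim]
    rw [h2]
    exact Submodule.add_mem_sup ⟨_, rfl⟩ ⟨_, rfl⟩
  calc (Matrix.fromCols A.transpose B.transpose).rank
      = finrank ℂ (LinearMap.range (Matrix.fromCols A.transpose B.transpose).mulVecLin) := rfl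
    _ ≤ finrank ℂ ((LinearMap.range A.transpose.mulVecLin)
          ⊔ (LinearMap.range B.transpose.mulVecLin) :
        Submodule ℂ (Fin D → ℂ)) := Submodule.finrank_mono hle
    _ ≤ A.transpose.rank + B.transpose.rank :=
        Submodule.finrank_add_le_finrank_add_finrank _ _

lemma neg_mem_QPSK' {x : ℂ} (hx : x ∈ QPSK) : -x ∈ QPSK := by
  simp only [QPSK, Finset.mem_insert, Finset.mem_singleton] at hx ⊢
  rcases hx with h|h|h|h <;> subst h
  · right; right; right; ring
  · right; right; left; ring
  · right; left; ring
  · left; ring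

lemma QPSK_ne_zero' {x : ℂ} (hx : x ∈ QPSK) : x ≠ 0 := by
  have h2 : (Real.sqrt 2 : ℂ) ≠ 0 := by
    rw [Complex.ofReal_ne_zero, Real.sqrt_ne_zero']; norm_num
  simp only [QPSK, Finset.mem_insert, Finset.mem_singleton] at hx
  rcases hx with h|h|h|h <;> subst h <;>
    exact div_ne_zero (by simp [Complex.ext_iff]) h2

/-- Any jammer with `rank W_D < I` is eclipsed (perfect-CSI sense). -/
theorem stmt14 (U I D : ℕ) (hU : 0 < U) (hI : 0 < I) (hD : 0 < D)
    (S_D : Matrix (Fin U) (Fin D) ℂ) (hSD : ∀ i j, S_D i j ∈ QPSK)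
    (W_D : Matrix (Fin I) (Fin D) ℂ) (hW : W_D.rank < I) :
    EclipsedCSI S_D W_D := by
  classical
  set i0 : Fin U := ⟨0, hU⟩
  set j0 : Fin D := ⟨0, hD⟩
  set St : Matrix (Fin U) (Fin D) ℂ :=
    Matrix.of fun i j => if i = i0 ∧ j = j0 then -(S_D i j) else S_D i j with hSt
  have hStQ : ∀ i j, St i j ∈ QPSK := by
    intro i j
    by_cases h : i = i0 ∧ j = j0
    · simpa [hSt, h] using neg_mem_QPSK' (hSD i j)
    · simpa [hSt, h] using hSD i j
  have hne : St ≠ S_D := by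
    intro h
    have h00 : St i0 j0 = S_D i0 j0 := by rw [h]
    have : -(S_D i0 j0) = S_D i0 j0 := by simpa [hSt] using h00
    have hz : S_D i0 j0 = 0 := by
      have := congrArg (fun z => z + S_D i0 j0) this
      simp at this
      linear_combination -this / 2
    exact QPSK_ne_zero' (hSD i0 j0) hz
  have hΔ : ∀ i j, (S_D - St) i j = if i = i0 ∧ j = j0 then 2 * S_D i0 j0 else 0 := by
    intro i j
    by_cases h : i = i0 ∧ j = j0
    · obtain ⟨h1, h2⟩ := h; subst h1; subst h2
      simp [hSt]; ring
    · simp [hSt, h]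
  have hsingle : (Pi.single i0 1 : Fin U → ℂ) ≠ 0 := by
    intro h
    have := congrFun h i0
    simp at this
  have hΔrank : (S_D - St).rank ≤ 1 := by
    have hspan : LinearMap.range (S_D - St).mulVecLin ≤
        Submodule.span ℂ {(Pi.single i0 1 : Fin U → ℂ)} := by
      rintro x ⟨v, rfl⟩
      rw [Submodule.mem_span_singleton]
      refine ⟨2 * S_D i0 j0 * v j0, ?_⟩
      ext i
      simp only [Matrix.mulVecLin_apply, Matrix.mulVec, dotProduct,
        Pi.smul_apply, smul_eq_mul, Pi.single_apply]
      by_cases hi : i = i0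
      · subst hi
        rw [Finset.sum_congr rfl (fun j _ => by rw [hΔ]), if_pos rfl]
        simp [Finset.sum_ite_eq', mul_comm, mul_assoc]
      · rw [Finset.sum_congr rfl (fun j _ => by rw [hΔ])]
        simp [hi]
    calc (S_D - St).rank
        ≤ Module.finrank ℂ (Submodule.span ℂ {(Pi.single i0 1 : Fin U → ℂ)}) :=
          Submodule.finrank_mono hspan
      _ = 1 := finrank_span_singleton hsingle
  refine ⟨St, hStQ, hne, ?_⟩
  calc (Matrix.fromRows (S_D - St) W_D).rank
      ≤ (S_D - St).rank + W_D.rank := rank_fromRows_le' _ _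
    _ ≤ 1 + W_D.rank := by omega
    _ ≤ I := by omega
end

section
/- Let m ≥ 2, let s ∈ S^m, and let w = √2·(1, 1, …, 1) ∈ ℂ^m. Then there exists s̃ ∈ S^m with s̃ ≠ s such that s̃ − s is collinear with w if and only if all entries of s have positive real part, or all entries have negative real part, or all entries have positive imaginary part, or all entries have negative imaginary part. -/
open scoped BigOperators
open scoped Classical

lemma collinear_of_const {m : ℕ} (c w : ℂ) :
    Collinear2 (fun _ : Fin m => c) (fun _ => w) := by
  unfold Collinear2
  have hAB : (Matrix.of ![(fun _ : Fin m => c), fun _ => w]) =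
      (Matrix.of ![(fun _ : Fin 1 => c), fun _ => w]) *
        (Matrix.of fun (_ : Fin 1) (_ : Fin m) => (1 : ℂ)) := by
    ext i j
    fin_cases i <;> simp [Matrix.mul_apply]
  rw [hAB]
  refine le_trans (Matrix.rank_mul_le_left _ _) ?_
  refine le_trans (Matrix.rank_le_card_width _) (by simp)

lemma const_of_collinear {m : ℕ} {x : Fin m → ℂ} {w : ℂ} (hw : w ≠ 0)
    (h : Collinear2 x (fun _ => w)) : ∀ j k, x j = x k := by
  by_contra hc
  push_neg at hc
  obtain ⟨j, k, hjk⟩ := hc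
  set A : Matrix (Fin 2) (Fin m) ℂ := Matrix.of ![x, fun _ => w] with hA
  have hcol : ∀ l : Fin m, (fun i => A i l) ∈ LinearMap.range A.mulVecLin := by
    intro l
    exact ⟨Pi.single l 1, by simp [Matrix.mulVecLin_apply]; rfl⟩
  have hli : LinearIndependent ℂ ![(fun i => A i j), (fun i => A i k)] := by
    rw [LinearIndependent.pair_iff]
    intro s t hst
    have h0 : s * x j + t * x k = 0 := congrFun hst 0
    have h1 : s * w + t * w = 0 := congrFun hst 1
    have hs : s = -t := by
      have h2 : (s + t) * w = 0 := by linear_combination h1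
      rcases mul_eq_zero.1 h2 with h2 | h2
      · exact eq_neg_of_add_eq_zero_left h2
      · exact absurd h2 hw
    have ht : t = 0 := by
      rw [hs] at h0
      have h3 : t * (x k - x j) = 0 := by linear_combination h0
      rcases mul_eq_zero.1 h3 with h3 | h3
      · exact h3
      · exact absurd (sub_eq_zero.1 h3).symm hjk
    exact ⟨by rw [hs, ht, neg_zero], ht⟩
  have hspan : Submodule.span ℂ (Set.range ![(fun i => A i j), fun i => A i k]) ≤
      LinearMap.range A.mulVecLin := by
    rw [Submodule.span_le]
    rintro v ⟨i, rfl⟩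
    fin_cases i <;> exact hcol _
  have h2 : 2 ≤ A.rank := by
    have hcard := finrank_span_eq_card hli
    have hle : Module.finrank ℂ
        (Submodule.span ℂ (Set.range ![(fun i => A i j), fun i => A i k])) ≤ A.rank :=
      Submodule.finrank_mono hspan
    simp only [hcard] at hle
    simpa using hle
  unfold Collinear2 at h
  rw [hA] at h2
  omega

lemma qpsk_iff {z : ℂ} : z ∈ QPSK ↔
    z = (1 + Complex.I) / (Real.sqrt 2 : ℂ) ∨ z = (1 - Complex.I) / (Real.sqrt 2 : ℂ) ∨
    z = (-1 + Complex.I) / (Real.sqrt 2 : ℂ) ∨ z = (-1 - Complex.I) / (Real.sqrt 2 : ℂ) := by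
  simp [QPSK]

lemma qpsk_re {z : ℂ} (hz : z ∈ QPSK) :
    z.re = (Real.sqrt 2)⁻¹ ∨ z.re = -(Real.sqrt 2)⁻¹ := by
  rcases qpsk_iff.1 hz with h | h | h | h <;> subst h
  · left; simp [one_div]
  · left; simp [one_div]
  · right; simp [neg_div, one_div]
  · right; simp [neg_div, one_div]

lemma qpsk_im {z : ℂ} (hz : z ∈ QPSK) :
    z.im = (Real.sqrt 2)⁻¹ ∨ z.im = -(Real.sqrt 2)⁻¹ := by
  rcases qpsk_iff.1 hz with h | h | h | h <;> subst h
  · left; simp [one_div]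
  · right; simp [neg_div, one_div]
  · left; simp [one_div]
  · right; simp [neg_div, one_div]


/-- For `m ≥ 2`, `s ∈ S^m`, and `w = √2·(1,…,1)`, there exists
`s̃ ∈ S^m`, `s̃ ≠ s`, with `s̃ − s` collinear with `w` iff all entries of `s` have
positive real part, or all negative real part, or all positive imaginary part, or all
negative imaginary part. -/
theorem stmt17 (m : ℕ) (hm : 2 ≤ m) (s : Fin m → ℂ) (hs : ∀ k, s k ∈ QPSK) :
    (∃ st : Fin m → ℂ, (∀ k, st k ∈ QPSK) ∧ st ≠ s ∧
        Collinear2 (st - s) (fun _ => ((Real.sqrt 2 : ℝ) : ℂ))) ↔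
      ((∀ k, 0 < (s k).re) ∨ (∀ k, (s k).re < 0) ∨
        (∀ k, 0 < (s k).im) ∨ (∀ k, (s k).im < 0)) := by
  have hr0 : (0:ℝ) < Real.sqrt 2 := Real.sqrt_pos.2 (by norm_num)
  have hrne : Real.sqrt 2 ≠ 0 := ne_of_gt hr0
  have hrC : ((Real.sqrt 2 : ℝ) : ℂ) ≠ 0 := Complex.ofReal_ne_zero.2 hrne
  have hr2 : ((Real.sqrt 2 : ℝ) : ℂ) * ((Real.sqrt 2 : ℝ) : ℂ) = 2 := by
    rw [← Complex.ofReal_mul, Real.mul_self_sqrt (by norm_num)]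
    norm_num
  have hinvpos : (0:ℝ) < (Real.sqrt 2)⁻¹ := by positivity
  have k0 : Fin m := ⟨0, by omega⟩
  constructor
  · rintro ⟨st, hmem, hne, hcol⟩
    have hconst := const_of_collinear hrC hcol
    set d := st k0 - s k0 with hd
    have hstk : ∀ k, st k = s k + d := by
      intro k
      have h := hconst k k0
      simp only [Pi.sub_apply] at h
      rw [hd, ← h]
      ring
    have hdne : d ≠ 0 := by
      intro h0
      apply hne
      funext k
      rw [hstk k, h0, add_zero]
    have hre : ∀ k, (st k).re = (s k).re + d.re := by
      intro k; rw [hstk k]; simp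
    have him : ∀ k, (st k).im = (s k).im + d.im := by
      intro k; rw [hstk k]; simp
    rcases lt_trichotomy d.re 0 with hlt | heq | hgt
    · left
      intro k
      rcases qpsk_re (hs k) with h | h
      · rw [h]; exact hinvpos
      · exfalso
        have h' := hre k
        rcases qpsk_re (hmem k) with h'' | h'' <;> rw [h''] at h' <;> rw [h] at h' <;> linarith
    · rcases lt_trichotomy d.im 0 with hilt | hieq | higt
      · right; right; left
        intro k
        rcases qpsk_im (hs k) with h | h
        · rw [h]; exact hinvpos
        · exfalso
          have h' := him k
          rcases qpsk_im (hmem k) with h'' | h'' <;> rw [h''] at h' <;> rw [h] at h' <;> linarith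
      · exact absurd (Complex.ext_iff.2 ⟨by simpa using heq, by simpa using hieq⟩) hdne
      · right; right; right
        intro k
        rcases qpsk_im (hs k) with h | h
        · exfalso
          have h' := him k
          rcases qpsk_im (hmem k) with h'' | h'' <;> rw [h''] at h' <;> rw [h] at h' <;> linarith
        · rw [h]; linarith
    · right; left
      intro k
      rcases qpsk_re (hs k) with h | h
      · exfalso
        have h' := hre k
        rcases qpsk_re (hmem k) with h'' | h'' <;> rw [h''] at h' <;> rw [h] at h' <;> linarith
      · rw [h]; linarith
  · have hq1re : ((1 + Complex.I) / ((Real.sqrt 2 : ℝ) : ℂ)).re = (Real.sqrt 2)⁻¹ := by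
      simp [one_div]
    have hq2re : ((1 - Complex.I) / ((Real.sqrt 2 : ℝ) : ℂ)).re = (Real.sqrt 2)⁻¹ := by
      simp [one_div]
    have hq3re : ((-1 + Complex.I) / ((Real.sqrt 2 : ℝ) : ℂ)).re = -(Real.sqrt 2)⁻¹ := by
      simp [neg_div, one_div]
    have hq4re : ((-1 - Complex.I) / ((Real.sqrt 2 : ℝ) : ℂ)).re = -(Real.sqrt 2)⁻¹ := by
      simp [neg_div, one_div]
    have hq1im : ((1 + Complex.I) / ((Real.sqrt 2 : ℝ) : ℂ)).im = (Real.sqrt 2)⁻¹ := by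
      simp [one_div]
    have hq2im : ((1 - Complex.I) / ((Real.sqrt 2 : ℝ) : ℂ)).im = -(Real.sqrt 2)⁻¹ := by
      simp [neg_div, one_div]
    have hq3im : ((-1 + Complex.I) / ((Real.sqrt 2 : ℝ) : ℂ)).im = (Real.sqrt 2)⁻¹ := by
      simp [one_div]
    have hq4im : ((-1 - Complex.I) / ((Real.sqrt 2 : ℝ) : ℂ)).im = -(Real.sqrt 2)⁻¹ := by
      simp [neg_div, one_div]
    rintro (h | h | h | h)
    · refine ⟨fun k => s k - ((Real.sqrt 2 : ℝ) : ℂ), ?_, ?_, ?_⟩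
      · intro k
        show s k - ((Real.sqrt 2 : ℝ) : ℂ) ∈ QPSK
        rcases qpsk_iff.1 (hs k) with h1 | h1 | h1 | h1 <;> rw [h1] <;> apply qpsk_iff.2
        · right; right; left
          field_simp
          linear_combination -hr2
        · right; right; right
          field_simp
          linear_combination -hr2
        · exfalso; have := h k; rw [h1, hq3re] at this; linarith
        · exfalso; have := h k; rw [h1, hq4re] at this; linarith
      · intro hEq
        have := congrFun hEq k0
        exact hrC (sub_eq_self.mp this)
      · have hxs : (fun k => s k - ((Real.sqrt 2 : ℝ) : ℂ)) - s =
            fun _ : Fin m => -((Real.sqrt 2 : ℝ) : ℂ) := by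
          funext k
          show s k - _ - s k = _
          ring
        rw [hxs]
        exact collinear_of_const _ _
    · refine ⟨fun k => s k + ((Real.sqrt 2 : ℝ) : ℂ), ?_, ?_, ?_⟩
      · intro k
        show s k + ((Real.sqrt 2 : ℝ) : ℂ) ∈ QPSK
        rcases qpsk_iff.1 (hs k) with h1 | h1 | h1 | h1 <;> rw [h1] <;> apply qpsk_iff.2
        · exfalso; have := h k; rw [h1, hq1re] at this; linarith
        · exfalso; have := h k; rw [h1, hq2re] at this; linarith
        · left
          field_simp
          linear_combination hr2
        · right; left
          field_simp
          linear_combination hr2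
      · intro hEq
        have := congrFun hEq k0
        exact hrC (add_eq_left.mp this)
      · have hxs : (fun k => s k + ((Real.sqrt 2 : ℝ) : ℂ)) - s =
            fun _ : Fin m => ((Real.sqrt 2 : ℝ) : ℂ) := by
          funext k
          show s k + _ - s k = _
          ring
        rw [hxs]
        exact collinear_of_const _ _
    · refine ⟨fun k => s k - ((Real.sqrt 2 : ℝ) : ℂ) * Complex.I, ?_, ?_, ?_⟩
      · intro k
        show s k - ((Real.sqrt 2 : ℝ) : ℂ) * Complex.I ∈ QPSK
        rcases qpsk_iff.1 (hs k) with h1 | h1 | h1 | h1 <;> rw [h1] <;> apply qpsk_iff.2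
        · right; left
          field_simp
          linear_combination -Complex.I * hr2
        · exfalso; have := h k; rw [h1, hq2im] at this; linarith
        · right; right; right
          field_simp
          linear_combination -Complex.I * hr2
        · exfalso; have := h k; rw [h1, hq4im] at this; linarith
      · intro hEq
        have := congrFun hEq k0
        have h2 := sub_eq_self.mp this
        rw [mul_eq_zero] at h2
        rcases h2 with h2 | h2
        · exact hrC h2
        · exact Complex.I_ne_zero h2
      · have hxs : (fun k => s k - ((Real.sqrt 2 : ℝ) : ℂ) * Complex.I) - s =
            fun _ : Fin m => -(((Real.sqrt 2 : ℝ) : ℂ)) * Complex.I := by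
          funext k
          show s k - _ - s k = _
          ring
        rw [hxs]
        exact collinear_of_const _ _
    · refine ⟨fun k => s k + ((Real.sqrt 2 : ℝ) : ℂ) * Complex.I, ?_, ?_, ?_⟩
      · intro k
        show s k + ((Real.sqrt 2 : ℝ) : ℂ) * Complex.I ∈ QPSK
        rcases qpsk_iff.1 (hs k) with h1 | h1 | h1 | h1 <;> rw [h1] <;> apply qpsk_iff.2
        · exfalso; have := h k; rw [h1, hq1im] at this; linarith
        · left
          field_simp
          linear_combination Complex.I * hr2
        · exfalso; have := h k; rw [h1, hq3im] at this; linarith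
        · right; right; left
          field_simp
          linear_combination Complex.I * hr2
      · intro hEq
        have := congrFun hEq k0
        have h2 := add_eq_left.mp this
        rw [mul_eq_zero] at h2
        rcases h2 with h2 | h2
        · exact hrC h2
        · exact Complex.I_ne_zero h2
      · have hxs : (fun k => s k + ((Real.sqrt 2 : ℝ) : ℂ) * Complex.I) - s =
            fun _ : Fin m => (((Real.sqrt 2 : ℝ) : ℂ)) * Complex.I := by
          funext k
          show s k + _ - s k = _
          ring
        rw [hxs]
        exact collinear_of_const _ _
end

section
/- Let U, D ≥ 1, let α ∈ ℂ with α ≠ 0, and let w ∈ (Ŵ_α)^D be a vector all of whose entries lie in Ŵ_α = {0, α, iα, −α, −iα}, with m = ‖w‖₀ ≥ 1 nonzero entries. If S_D is drawn uniformly at random from S^{U×D}, then the probability that the single-antenna jammer (I = 1) with data-phase transmit vector w is eclipsed (perfect-CSI sense) equals exactly 1 − (1 − (2^m − 1)/4^{m−1})^U. -/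
open scoped BigOperators
open scoped Classical

/-- `Ŵ_α = {0, α, iα, −α, −iα}`. -/
def What (a : ℂ) : Set ℂ := {0, a, Complex.I * a, -a, -(Complex.I * a)}

namespace S19
open GaussianInt Module Submodule

noncomputable def c2 : ℂ := (Real.sqrt 2 : ℂ)

lemma c2_ne : c2 ≠ 0 := by
  simp only [c2, ne_eq, Complex.ofReal_eq_zero]
  exact (Real.sqrt_pos.mpr (by norm_num)).ne'

noncomputable def gq (x : GaussianInt) : ℂ := toComplex x / c2

lemma gq_inj : Function.Injective gq := fun x y h => by
  apply toComplex_inj.mp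
  rw [gq, gq, div_eq_div_iff c2_ne c2_ne] at h
  exact mul_right_cancel₀ c2_ne h

lemma gq_sub (x y : GaussianInt) : gq x - gq y = gq (x - y) := by
  simp [gq, map_sub, div_sub_div_same]

lemma gq_mul (x u : GaussianInt) : gq x * toComplex u = gq (x * u) := by
  simp [gq, map_mul, div_mul_eq_mul_div]

lemma gq_eq_zero {x : GaussianInt} : gq x = 0 ↔ x = 0 := by
  rw [gq, div_eq_zero_iff]
  simp [toComplex_eq_zero, c2_ne]

def G4 : Finset GaussianInt := {⟨1,1⟩, ⟨1,-1⟩, ⟨-1,1⟩, ⟨-1,-1⟩}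
def U4 : Finset GaussianInt := {⟨1,0⟩, ⟨0,1⟩, ⟨-1,0⟩, ⟨0,-1⟩}
def A4 : Finset GaussianInt := {⟨2,0⟩, ⟨0,2⟩, ⟨-2,0⟩, ⟨0,-2⟩}
def D8 : Finset GaussianInt := {⟨2,0⟩, ⟨0,2⟩, ⟨-2,0⟩, ⟨0,-2⟩, ⟨2,2⟩, ⟨2,-2⟩, ⟨-2,2⟩, ⟨-2,-2⟩}

lemma QPSK_eq : QPSK = G4.image gq := by
  have h1 : gq ⟨1,1⟩ = (1 + Complex.I) / (Real.sqrt 2 : ℂ) := by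
    rw [gq, toComplex_def', c2]; push_cast; ring_nf
  have h2 : gq ⟨1,-1⟩ = (1 - Complex.I) / (Real.sqrt 2 : ℂ) := by
    rw [gq, toComplex_def', c2]; push_cast; ring_nf
  have h3 : gq ⟨-1,1⟩ = (-1 + Complex.I) / (Real.sqrt 2 : ℂ) := by
    rw [gq, toComplex_def', c2]; push_cast; ring_nf
  have h4 : gq ⟨-1,-1⟩ = (-1 - Complex.I) / (Real.sqrt 2 : ℂ) := by
    rw [gq, toComplex_def', c2]; push_cast; ring_nf
  simp [QPSK, G4, Finset.image_insert, h1, h2, h3, h4]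

lemma mem_QPSK {x : ℂ} : x ∈ QPSK ↔ ∃ σ ∈ G4, gq σ = x := by
  rw [QPSK_eq, Finset.mem_image]

lemma gq_mem {x : GaussianInt} : gq x ∈ QPSK ↔ x ∈ G4 := by
  rw [mem_QPSK]
  constructor
  · rintro ⟨σ, hσ, h⟩; rwa [← gq_inj h]
  · exact fun h => ⟨x, h, rfl⟩

lemma card_QPSK : QPSK.card = 4 := by
  rw [QPSK_eq, Finset.card_image_of_injective _ gq_inj]; decide

def Hq (ζ υ : GaussianInt) : Finset GaussianInt := G4.filter (fun σ => σ - ζ*υ ∈ G4)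

lemma F_card2 : ∀ ζ ∈ A4, ∀ υ ∈ U4, (Hq ζ υ).card = 2 := by decide
lemma F_opp1 : ∀ υ ∈ U4, (Hq ⟨2,0⟩ υ ∩ Hq ⟨-2,0⟩ υ) = ∅ := by decide
lemma F_opp2 : ∀ υ ∈ U4, (Hq ⟨0,2⟩ υ ∩ Hq ⟨0,-2⟩ υ) = ∅ := by decide
lemma F_adj : ∀ υ ∈ U4, ∀ ζ ∈ ({⟨2,0⟩, ⟨-2,0⟩} : Finset GaussianInt),
    ∀ ζ' ∈ ({⟨0,2⟩, ⟨0,-2⟩} : Finset GaussianInt), (Hq ζ υ ∩ Hq ζ' υ).card = 1 := by decide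
lemma F_D8 : ∀ σ ∈ G4, ∀ σ' ∈ G4, ∀ υ ∈ U4, σ ≠ σ' → (σ - σ') * star υ ∈ D8 := by decide
lemma F_diag : ∀ ζ ∈ D8, ζ ∉ A4 →
    ((⟨ζ.re, 0⟩ : GaussianInt) ∈ A4 ∧
      ∀ σ ∈ G4, ∀ υ ∈ U4, σ - ζ*υ ∈ G4 → σ - (⟨ζ.re,0⟩ : GaussianInt)*υ ∈ G4) := by decide
lemma F_unit : ∀ υ ∈ U4, υ * star υ = 1 := by decide
lemma F_A4_ne : ∀ ζ ∈ A4, ζ ≠ 0 := by decide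
lemma F_U4_ne : ∀ υ ∈ U4, υ ≠ 0 := by decide

/-- bridge identity -/
lemma bridge (σ ζ υ : GaussianInt) : gq σ - gq ζ * toComplex υ = gq (σ - ζ*υ) := by
  rw [gq_mul, gq_sub]

/-- rank-one criterion -/
lemma rank_le_one_iff_rows {ι : Type*} [Fintype ι] {m : ℕ} (M : Matrix ι (Fin m) ℂ) (i₀ : ι)
    (hw : M i₀ ≠ 0) : M.rank ≤ 1 ↔ ∀ i, ∃ c : ℂ, M i = c • M i₀ := by
  rw [Matrix.rank_eq_finrank_span_row]
  change finrank ℂ (Submodule.span ℂ (Set.range M)) ≤ 1 ↔ _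
  constructor
  · intro h i
    by_contra hc
    push_neg at hc
    have hmem : M i ∉ (Submodule.span ℂ {M i₀}) := by
      rw [Submodule.mem_span_singleton]
      rintro ⟨c, hcc⟩
      exact hc c hcc.symm
    have hlt : Submodule.span ℂ {M i₀} < Submodule.span ℂ (Set.range M) := by
      refine lt_of_le_of_ne
        (Submodule.span_mono (by rw [Set.singleton_subset_iff]; exact ⟨i₀, rfl⟩)) ?_
      intro he
      exact hmem (he ▸ Submodule.subset_span (Set.mem_range_self i))
    have h1 : finrank ℂ (Submodule.span ℂ ({M i₀} : Set (Fin m → ℂ))) = 1 :=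
      finrank_span_singleton hw
    have h2 := Submodule.finrank_lt_finrank_of_lt hlt
    omega
  · intro h
    have hle : Submodule.span ℂ (Set.range M) ≤ Submodule.span ℂ {M i₀} := by
      rw [Submodule.span_le]
      rintro _ ⟨i, rfl⟩
      obtain ⟨c, hc⟩ := h i
      rw [hc]
      exact Submodule.smul_mem _ c (Submodule.mem_span_singleton_self _)
    calc finrank ℂ (Submodule.span ℂ (Set.range M))
        ≤ finrank ℂ (Submodule.span ℂ ({M i₀} : Set (Fin m → ℂ))) := Submodule.finrank_mono hle
      _ = 1 := finrank_span_singleton hw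

/-- row-wise goodness -/
def rowGood {D : ℕ} (w : Fin D → ℂ) (s : Fin D → ℂ) : Prop :=
  ∃ st : Fin D → ℂ, (∀ k, st k ∈ QPSK) ∧ st ≠ s ∧ ∃ c : ℂ, s - st = c • w

section Main

variable {D : ℕ} {a : ℂ} {w : Fin D → ℂ}

/-- unit representatives of the entries of `w` -/
lemma units_exist (ha : a ≠ 0) (hw : ∀ k, w k ∈ What a) :
    ∀ k, w k ≠ 0 → ∃ υ ∈ U4, w k = a * toComplex υ := by
  intro k hk
  have := hw k
  simp only [What, Set.mem_insert_iff, Set.mem_singleton_iff] at this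
  rcases this with h | h | h | h | h
  · exact absurd h hk
  · exact ⟨⟨1,0⟩, by decide, by rw [h, toComplex_def']; push_cast; ring⟩
  · exact ⟨⟨0,1⟩, by decide, by rw [h, toComplex_def']; push_cast; ring⟩
  · exact ⟨⟨-1,0⟩, by decide, by rw [h, toComplex_def']; push_cast; ring⟩
  · exact ⟨⟨0,-1⟩, by decide, by rw [h, toComplex_def']; push_cast; ring⟩

lemma eclipsed_iff {U : ℕ} (hw0 : w ≠ 0) (S : Matrix (Fin U) (Fin D) ℂ)
    (hS : ∀ u k, S u k ∈ QPSK) :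
    EclipsedCSI S (Matrix.of fun _ : Fin 1 => w) ↔ ∃ u, rowGood w (S u) := by
  constructor
  · rintro ⟨St, hSt, hne, hrank⟩
    set M := Matrix.fromRows (S - St) (Matrix.of fun _ : Fin 1 => w) with hM
    have hMw : M (Sum.inr 0) = w := rfl
    have h1 : M.rank ≤ 1 := hrank
    rw [rank_le_one_iff_rows M (Sum.inr 0) (by rw [hMw]; exact hw0)] at h1
    have hu : ∃ u, ∃ j, St u j ≠ S u j := by
      by_contra hcon
      push_neg at hcon
      exact hne (Matrix.ext fun u j => hcon u j)
    obtain ⟨u, j, huj⟩ := hu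
    obtain ⟨c, hc⟩ := h1 (Sum.inl u)
    refine ⟨u, fun k => St u k, fun k => hSt u k, ?_, c, ?_⟩
    · intro hcon
      exact huj (congrFun hcon j)
    · have : M (Sum.inl u) = fun k => S u k - St u k := by
        funext k; simp [hM, Matrix.fromRows_apply_inl, Matrix.sub_apply]
      rw [this] at hc
      rw [hMw] at hc
      funext k
      have := congrFun hc k
      simpa using this
  · rintro ⟨u, st, hst, hne, c, hc⟩
    refine ⟨Matrix.of (fun v k => if v = u then st k else S v k), ?_, ?_, ?_⟩
    · intro v k
      dsimp only [Matrix.of_apply]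
      split_ifs
      · exact hst k
      · exact hS v k
    · intro hcon
      apply hne
      funext k
      have := congrFun (congrFun hcon u) k
      simpa using this
    · set St := Matrix.of (fun v k => if v = u then st k else S v k) with hStdef
      set M := Matrix.fromRows (S - St) (Matrix.of fun _ : Fin 1 => w) with hM
      have hMw : M (Sum.inr 0) = w := rfl
      have : M.rank ≤ 1 := by
        rw [rank_le_one_iff_rows M (Sum.inr 0) (by rw [hMw]; exact hw0)]
        rintro (v | j)
        · by_cases hv : v = u
          · subst hv
            refine ⟨c, ?_⟩
            funext k
            have hck := congrFun hc k
            simp only [Pi.sub_apply] at hck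
            simp [hM, Matrix.fromRows_apply_inl, Matrix.fromRows_apply_inr, Matrix.sub_apply, hStdef, hMw]
            simpa using hck
          · refine ⟨0, ?_⟩
            funext k
            simp [hM, Matrix.fromRows_apply_inl, Matrix.fromRows_apply_inr, Matrix.sub_apply, hStdef, hv, hMw]
        · refine ⟨1, ?_⟩
          have : (Sum.inr j : Fin U ⊕ Fin 1) = Sum.inr 0 := by
            congr
            exact Subsingleton.elim _ _
          rw [this, hMw, one_smul]
      exact this

/-- characterization of `rowGood` over QPSK vectors -/
lemma rowGood_iff (ha : a ≠ 0) (hw : ∀ k, w k ∈ What a) (hm : ∃ k₀, w k₀ ≠ 0)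
    {s : Fin D → ℂ} (hs : ∀ k, s k ∈ QPSK) :
    rowGood w s ↔ ∃ ζ ∈ A4, ∀ k, w k ≠ 0 → s k - gq ζ * (w k / a) ∈ QPSK := by
  obtain ⟨k₀, hk₀⟩ := hm
  have hwk : ∀ k, w k ≠ 0 → ∃ υ ∈ U4, w k = a * toComplex υ := units_exist ha hw
  constructor
  · rintro ⟨st, hst, hne, c, hc⟩
    have hcball : ∀ k, st k = s k - c * w k := by
      intro k
      have := congrFun hc k
      simp only [Pi.sub_apply, Pi.smul_apply, smul_eq_mul] at this
      linear_combination -this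
    have hcne : c ≠ 0 := by
      rintro rfl
      apply hne
      funext k
      rw [hcball k]; ring
    -- representatives at k₀
    obtain ⟨υ₀, hυ₀U, hυ₀⟩ := hwk k₀ hk₀
    obtain ⟨σ₀, hσ₀, hσ₀e⟩ := mem_QPSK.mp (hs k₀)
    obtain ⟨τ₀, hτ₀, hτ₀e⟩ := mem_QPSK.mp (hst k₀)
    set z := c * a with hz
    have hzne : z ≠ 0 := mul_ne_zero hcne ha
    have hkey : gq (σ₀ - τ₀) = z * toComplex υ₀ := by
      rw [← gq_sub, hσ₀e, hτ₀e, hcball k₀, hυ₀]; ring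
    set ζ₀ := (σ₀ - τ₀) * star υ₀ with hζ₀
    have hz_eq : gq ζ₀ = z := by
      rw [hζ₀, ← gq_mul, hkey, mul_assoc, ← map_mul, F_unit υ₀ hυ₀U, map_one, mul_one]
    have hστ : σ₀ ≠ τ₀ := by
      intro hcon
      apply hzne
      have : gq (σ₀ - τ₀) = 0 := by rw [hcon, sub_self]; exact gq_eq_zero.mpr rfl
      rw [hkey] at this
      rcases mul_eq_zero.mp this with h | h
      · exact h
      · exact absurd (toComplex_eq_zero.mp h) (F_U4_ne υ₀ hυ₀U)
    have hζD8 : ζ₀ ∈ D8 := F_D8 σ₀ hσ₀ τ₀ hτ₀ υ₀ hυ₀U hστ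
    -- the condition holds for ζ₀
    have hcond : ∀ k, w k ≠ 0 → s k - gq ζ₀ * (w k / a) ∈ QPSK := by
      intro k hk
      obtain ⟨υ, hυU, hυ⟩ := hwk k hk
      have hdiv : w k / a = toComplex υ := by rw [hυ]; field_simp
      rw [hdiv, hz_eq]
      have : s k - z * toComplex υ = st k := by
        rw [hcball k, hυ, hz]; ring
      rw [this]
      exact hst k
    by_cases hA : ζ₀ ∈ A4
    · exact ⟨ζ₀, hA, hcond⟩
    · obtain ⟨hA4', himp⟩ := F_diag ζ₀ hζD8 hA
      refine ⟨⟨ζ₀.re, 0⟩, hA4', ?_⟩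
      intro k hk
      obtain ⟨υ, hυU, hυ⟩ := hwk k hk
      have hdiv : w k / a = toComplex υ := by rw [hυ]; field_simp
      obtain ⟨σ, hσ, hσe⟩ := mem_QPSK.mp (hs k)
      have h1 : s k - gq ζ₀ * (w k / a) ∈ QPSK := hcond k hk
      rw [hdiv, ← hσe, bridge, gq_mem] at h1
      have h2 := himp σ hσ υ hυU h1
      rw [hdiv, ← hσe, bridge, gq_mem]
      exact h2
  · rintro ⟨ζ, hζ, hcond⟩
    set z := gq ζ with hz
    have hzne : z ≠ 0 := fun h => F_A4_ne ζ hζ (gq_eq_zero.mp h)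
    refine ⟨fun k => s k - (z / a) * w k, ?_, ?_, z / a, ?_⟩
    · intro k
      by_cases hk : w k = 0
      · simpa [hk] using hs k
      · show s k - (z / a) * w k ∈ QPSK
        have : s k - (z / a) * w k = s k - z * (w k / a) := by ring
        rw [this]
        exact hcond k hk
    · intro hcon
      have := congrFun hcon k₀
      have h0 : (z / a) * w k₀ = 0 := by linear_combination -this
      rcases mul_eq_zero.mp h0 with h | h
      · exact hzne (by field_simp at h; simpa using h)
      · exact hk₀ h
    · funext k
      simp only [Pi.sub_apply, Pi.smul_apply, smul_eq_mul]
      ring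

/-! ### Counting -/

lemma piFinset_inter {n : ℕ} (s t : Fin n → Finset ℂ) :
    Fintype.piFinset s ∩ Fintype.piFinset t = Fintype.piFinset (fun i => s i ∩ t i) := by
  ext f
  simp only [Finset.mem_inter, Fintype.mem_piFinset, ← forall_and]

noncomputable def Hc (ζ : GaussianInt) (φ : ℂ) : Finset ℂ :=
  QPSK.filter (fun x => x - gq ζ * φ ∈ QPSK)

lemma Hc_eq (ζ υ : GaussianInt) (φ : ℂ) (hφ : φ = toComplex υ) :
    Hc ζ φ = (Hq ζ υ).image gq := by
  ext x
  simp only [Hc, Finset.mem_filter, Hq, Finset.mem_image, Finset.mem_filter]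
  constructor
  · rintro ⟨hx, hcond⟩
    obtain ⟨σ, hσ, rfl⟩ := mem_QPSK.mp hx
    rw [hφ, bridge, gq_mem] at hcond
    exact ⟨σ, ⟨hσ, hcond⟩, rfl⟩
  · rintro ⟨σ, ⟨hσ, hcond⟩, rfl⟩
    exact ⟨gq_mem.mpr hσ, by rw [hφ, bridge, gq_mem]; exact hcond⟩

noncomputable def Aset (a : ℂ) (w : Fin D → ℂ) (ζ : GaussianInt) : Finset (Fin D → ℂ) :=
  Fintype.piFinset (fun k => if w k ≠ 0 then Hc ζ (w k / a) else QPSK)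

lemma mem_Aset {ζ : GaussianInt} {s : Fin D → ℂ} :
    s ∈ Aset a w ζ ↔ (∀ k, s k ∈ QPSK) ∧ ∀ k, w k ≠ 0 → s k - gq ζ * (w k / a) ∈ QPSK := by
  simp only [Aset, Fintype.mem_piFinset]
  constructor
  · intro h
    refine ⟨fun k => ?_, fun k hk => ?_⟩
    · have := h k
      split_ifs at this with hk
      · exact (Finset.mem_filter.mp this).1
      · exact this
    · have := h k
      rw [if_pos hk] at this
      exact (Finset.mem_filter.mp this).2
  · rintro ⟨h1, h2⟩ k
    split_ifs with hk
    · exact Finset.mem_filter.mpr ⟨h1 k, h2 k hk⟩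
    · exact h1 k

lemma card_piFinset_like (F : Fin D → Finset ℂ) (c : ℕ)
    (h1 : ∀ k, w k ≠ 0 → (F k).card = c) (h2 : ∀ k, w k = 0 → F k = QPSK) :
    (Fintype.piFinset F).card = c ^ (zeroNorm w) * 4 ^ (D - zeroNorm w) := by
  rw [Fintype.card_piFinset]
  rw [← Finset.prod_filter_mul_prod_filter_not Finset.univ (fun k => w k ≠ 0)]
  have e1 : (∏ k ∈ Finset.univ.filter (fun k => w k ≠ 0), (F k).card) = c ^ zeroNorm w := by
    rw [Finset.prod_congr rfl (fun k hk => h1 k (Finset.mem_filter.mp hk).2),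
      Finset.prod_const, zeroNorm]
  have e2 : (∏ k ∈ Finset.univ.filter (fun k => ¬ w k ≠ 0), (F k).card)
      = 4 ^ (D - zeroNorm w) := by
    rw [Finset.prod_congr rfl
      (fun k hk => by rw [h2 k (not_not.mp (Finset.mem_filter.mp hk).2), card_QPSK]),
      Finset.prod_const]
    congr 1
    have hcc := Finset.card_filter_add_card_filter_not
      (s := (Finset.univ : Finset (Fin D))) (p := fun k => w k ≠ 0)
    have : (Finset.univ : Finset (Fin D)).card = D := by simp
    rw [this] at hcc
    have : zeroNorm w = ((Finset.univ : Finset (Fin D)).filter (fun k => w k ≠ 0)).card := rfl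
    omega
  rw [e1, e2]

lemma card_Aset (ha : a ≠ 0) (hw : ∀ k, w k ∈ What a) (ζ : GaussianInt) (hζ : ζ ∈ A4) :
    (Aset a w ζ).card = 2 ^ (zeroNorm w) * 4 ^ (D - zeroNorm w) := by
  apply card_piFinset_like
  · intro k hk
    obtain ⟨υ, hυU, hυ⟩ := units_exist ha hw k hk
    rw [if_pos hk, Hc_eq ζ υ _ (by rw [hυ]; field_simp),
      Finset.card_image_of_injective _ gq_inj]
    exact F_card2 ζ hζ υ hυU
  · intro k hk
    rw [if_neg (not_not_intro hk)]

lemma Aset_inter (ζ ζ' : GaussianInt) :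
    Aset a w ζ ∩ Aset a w ζ' =
      Fintype.piFinset (fun k => if w k ≠ 0 then (Hc ζ (w k / a) ∩ Hc ζ' (w k / a)) else QPSK) := by
  rw [Aset, Aset, piFinset_inter]
  congr 1
  funext k
  split_ifs
  · rfl
  · exact Finset.inter_self _

lemma card_Aset_inter_adj (ha : a ≠ 0) (hw : ∀ k, w k ∈ What a) (ζ ζ' : GaussianInt)
    (hadj : ∀ υ ∈ U4, (Hq ζ υ ∩ Hq ζ' υ).card = 1) :
    (Aset a w ζ ∩ Aset a w ζ').card = 4 ^ (D - zeroNorm w) := by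
  rw [Aset_inter,
    show (4:ℕ) ^ (D - zeroNorm w) = 1 ^ zeroNorm w * 4 ^ (D - zeroNorm w) by
      rw [one_pow, one_mul]]
  apply card_piFinset_like
  · intro k hk
    obtain ⟨υ, hυU, hυ⟩ := units_exist ha hw k hk
    have hφ : w k / a = toComplex υ := by rw [hυ]; field_simp
    rw [if_pos hk, Hc_eq ζ υ _ hφ, Hc_eq ζ' υ _ hφ,
      ← Finset.image_inter _ _ gq_inj, Finset.card_image_of_injective _ gq_inj]
    exact hadj υ hυU
  · intro k hk
    rw [if_neg (not_not_intro hk)]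

lemma Aset_inter_opp (ha : a ≠ 0) (hw : ∀ k, w k ∈ What a) (ζ ζ' : GaussianInt) (hm : ∃ k₀, w k₀ ≠ 0)
    (hopp : ∀ υ ∈ U4, (Hq ζ υ ∩ Hq ζ' υ) = ∅) :
    Aset a w ζ ∩ Aset a w ζ' = ∅ := by
  obtain ⟨k₀, hk₀⟩ := hm
  rw [Aset_inter]
  rw [← Finset.card_eq_zero, Fintype.card_piFinset]
  apply Finset.prod_eq_zero (Finset.mem_univ k₀)
  obtain ⟨υ, hυU, hυ⟩ := units_exist ha hw k₀ hk₀
  have hφ : w k₀ / a = toComplex υ := by rw [hυ]; field_simp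
  rw [if_pos hk₀, Hc_eq ζ υ _ hφ, Hc_eq ζ' υ _ hφ,
    ← Finset.image_inter _ _ gq_inj, hopp υ hυU]
  simp

lemma card_good (ha : a ≠ 0) (hw : ∀ k, w k ∈ What a) (hm : ∃ k₀, w k₀ ≠ 0) :
    ((qpskVecs D).filter (rowGood w)).card
      = (4 * 2 ^ (zeroNorm w) - 4) * 4 ^ (D - zeroNorm w) := by
  set A1 := Aset a w ⟨2,0⟩
  set A2 := Aset a w ⟨-2,0⟩
  set A3 := Aset a w ⟨0,2⟩
  set A4' := Aset a w ⟨0,-2⟩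
  have hfil : (qpskVecs D).filter (rowGood w) = (A1 ∪ A2) ∪ (A3 ∪ A4') := by
    ext s
    simp only [Finset.mem_filter, Finset.mem_union, qpskVecs, Fintype.mem_piFinset]
    constructor
    · rintro ⟨hsQ, hgood⟩
      rw [rowGood_iff ha hw hm hsQ] at hgood
      obtain ⟨ζ, hζ, hcond⟩ := hgood
      have hζ' : ζ = ⟨2,0⟩ ∨ ζ = ⟨0,2⟩ ∨ ζ = ⟨-2,0⟩ ∨ ζ = ⟨0,-2⟩ := by
        simpa [S19.A4, Finset.mem_insert] using hζ
      rcases hζ' with rfl | rfl | rfl | rfl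
      · exact Or.inl (Or.inl (mem_Aset.mpr ⟨hsQ, hcond⟩))
      · exact Or.inr (Or.inl (mem_Aset.mpr ⟨hsQ, hcond⟩))
      · exact Or.inl (Or.inr (mem_Aset.mpr ⟨hsQ, hcond⟩))
      · exact Or.inr (Or.inr (mem_Aset.mpr ⟨hsQ, hcond⟩))
    · intro hmem
      have : ∃ ζ ∈ S19.A4, ∀ k, w k ≠ 0 → s k - gq ζ * (w k / a) ∈ QPSK := by
        rcases hmem with (h | h) | (h | h)
        · exact ⟨⟨2,0⟩, by decide, (mem_Aset.mp h).2⟩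
        · exact ⟨⟨-2,0⟩, by decide, (mem_Aset.mp h).2⟩
        · exact ⟨⟨0,2⟩, by decide, (mem_Aset.mp h).2⟩
        · exact ⟨⟨0,-2⟩, by decide, (mem_Aset.mp h).2⟩
      have hsQ : ∀ k, s k ∈ QPSK := by
        rcases hmem with (h | h) | (h | h) <;> exact (mem_Aset.mp h).1
      exact ⟨hsQ, (rowGood_iff ha hw hm hsQ).mpr this⟩
  rw [hfil]
  set m := zeroNorm w
  set x := 2 ^ m * 4 ^ (D - m) with hx
  set y := (4:ℕ) ^ (D - m) with hy
  have c1 : A1.card = x := card_Aset ha hw _ (by decide)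
  have c2 : A2.card = x := card_Aset ha hw _ (by decide)
  have c3 : A3.card = x := card_Aset ha hw _ (by decide)
  have c4 : A4'.card = x := card_Aset ha hw _ (by decide)
  have d12 : A1 ∩ A2 = ∅ := Aset_inter_opp ha hw _ _ hm F_opp1
  have d34 : A3 ∩ A4' = ∅ := Aset_inter_opp ha hw _ _ hm F_opp2
  have e13 : (A1 ∩ A3).card = y := card_Aset_inter_adj ha hw _ _
    (fun υ hυ => F_adj υ hυ ⟨2,0⟩ (by decide) ⟨0,2⟩ (by decide))
  have e14 : (A1 ∩ A4').card = y := card_Aset_inter_adj ha hw _ _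
    (fun υ hυ => F_adj υ hυ ⟨2,0⟩ (by decide) ⟨0,-2⟩ (by decide))
  have e23 : (A2 ∩ A3).card = y := card_Aset_inter_adj ha hw _ _
    (fun υ hυ => F_adj υ hυ ⟨-2,0⟩ (by decide) ⟨0,2⟩ (by decide))
  have e24 : (A2 ∩ A4').card = y := card_Aset_inter_adj ha hw _ _
    (fun υ hυ => F_adj υ hυ ⟨-2,0⟩ (by decide) ⟨0,-2⟩ (by decide))
  have cu12 : (A1 ∪ A2).card = 2 * x := by
    rw [Finset.card_union_of_disjoint (Finset.disjoint_iff_inter_eq_empty.mpr d12), c1, c2]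
    ring
  have cu34 : (A3 ∪ A4').card = 2 * x := by
    rw [Finset.card_union_of_disjoint (Finset.disjoint_iff_inter_eq_empty.mpr d34), c3, c4]
    ring
  have hXeq : (A1 ∪ A2) ∩ (A3 ∪ A4') =
      ((A1 ∩ A3) ∪ (A1 ∩ A4')) ∪ ((A2 ∩ A3) ∪ (A2 ∩ A4')) := by
    rw [Finset.union_inter_distrib_right, Finset.inter_union_distrib_left,
      Finset.inter_union_distrib_left]
  have disj1 : Disjoint (A1 ∩ A3) (A1 ∩ A4') := by
    rw [Finset.disjoint_left]
    intro p hp hq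
    have : p ∈ A3 ∩ A4' := Finset.mem_inter.mpr
      ⟨(Finset.mem_inter.mp hp).2, (Finset.mem_inter.mp hq).2⟩
    rw [d34] at this
    exact absurd this (Finset.notMem_empty p)
  have disj2 : Disjoint (A2 ∩ A3) (A2 ∩ A4') := by
    rw [Finset.disjoint_left]
    intro p hp hq
    have : p ∈ A3 ∩ A4' := Finset.mem_inter.mpr
      ⟨(Finset.mem_inter.mp hp).2, (Finset.mem_inter.mp hq).2⟩
    rw [d34] at this
    exact absurd this (Finset.notMem_empty p)
  have disjB : Disjoint ((A1 ∩ A3) ∪ (A1 ∩ A4')) ((A2 ∩ A3) ∪ (A2 ∩ A4')) := by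
    rw [Finset.disjoint_left]
    intro p hp hq
    have hp1 : p ∈ A1 := by
      rcases Finset.mem_union.mp hp with h | h <;> exact (Finset.mem_inter.mp h).1
    have hp2 : p ∈ A2 := by
      rcases Finset.mem_union.mp hq with h | h <;> exact (Finset.mem_inter.mp h).1
    have : p ∈ A1 ∩ A2 := Finset.mem_inter.mpr ⟨hp1, hp2⟩
    rw [d12] at this
    exact absurd this (Finset.notMem_empty p)
  have cX : ((A1 ∪ A2) ∩ (A3 ∪ A4')).card = 4 * y := by
    rw [hXeq, Finset.card_union_of_disjoint disjB,
      Finset.card_union_of_disjoint disj1, Finset.card_union_of_disjoint disj2,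
      e13, e14, e23, e24]
    ring
  have hsum := Finset.card_union_add_card_inter (A1 ∪ A2) (A3 ∪ A4')
  rw [cu12, cu34, cX] at hsum
  have hxy : x = 2 ^ m * y := by rw [hx, hy]
  have hgoal : (4 * 2 ^ m - 4) * y = 4 * x - 4 * y := by
    rw [Nat.sub_mul, hxy]
    ring_nf
  rw [hgoal]
  omega

lemma filter_not_ecl {U : ℕ} (hw0 : w ≠ 0) :
    (qpskMatrices U D).filter (fun S => ¬ EclipsedCSI S (Matrix.of fun _ : Fin 1 => w))
      = Fintype.piFinset (fun _ : Fin U => (qpskVecs D).filter (fun s => ¬ rowGood w s)) := by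
  ext S
  constructor
  · intro hSmem
    obtain ⟨hS, hne⟩ := Finset.mem_filter.mp hSmem
    rw [qpskMatrices] at hS
    have hSQ : ∀ u k, S u k ∈ QPSK := fun u k =>
      Fintype.mem_piFinset.mp (Fintype.mem_piFinset.mp hS u) k
    refine Fintype.mem_piFinset.mpr ?_
    intro u
    rw [Finset.mem_filter]
    refine ⟨Fintype.mem_piFinset.mp hS u, fun hgood => hne ?_⟩
    rw [eclipsed_iff hw0 S hSQ]
    exact ⟨u, hgood⟩
  · intro hSmem
    replace hSmem := Fintype.mem_piFinset.mp hSmem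
    have hS : ∀ u, S u ∈ qpskVecs D := fun u => (Finset.mem_filter.mp (hSmem u)).1
    have hSQ : ∀ u k, S u k ∈ QPSK := fun u k => Fintype.mem_piFinset.mp (hS u) k
    rw [Finset.mem_filter]
    refine ⟨?_, fun hecl => ?_⟩
    · rw [qpskMatrices]
      exact Fintype.mem_piFinset.mpr hS
    · obtain ⟨u, hgood⟩ := (eclipsed_iff hw0 S hSQ).mp hecl
      exact (Finset.mem_filter.mp (hSmem u)).2 hgood

end Main
end S19

/-- For a single-antenna jammer whose transmit vector `w` has all entries
in `Ŵ_α` (`α ≠ 0`) and `m = ‖w‖₀ ≥ 1` nonzero entries, with `S_D` uniform on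
`S^{U×D}`, the probability of eclipsing (perfect-CSI sense) equals exactly
`1 − (1 − (2^m − 1)/4^{m−1})^U`. -/
theorem stmt19 (U D : ℕ) (hU : 0 < U) (hD : 0 < D) (a : ℂ) (ha : a ≠ 0)
    (w : Fin D → ℂ) (hw : ∀ k, w k ∈ What a) (hm : 1 ≤ zeroNorm w) :
    probM U D (fun S_D => EclipsedCSI S_D (Matrix.of fun _ : Fin 1 => w)) =
      1 - (1 - ((2 : ℝ) ^ (zeroNorm w) - 1) / (4 : ℝ) ^ (zeroNorm w - 1)) ^ U := by
  classical
  set m := zeroNorm w with hmdef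
  have hk₀ : ∃ k₀, w k₀ ≠ 0 := by
    have hpos : 0 < (Finset.univ.filter fun k => w k ≠ 0).card := by
      have : zeroNorm w = (Finset.univ.filter fun k => w k ≠ 0).card := rfl
      omega
    obtain ⟨k₀, hk⟩ := Finset.card_pos.mp hpos
    exact ⟨k₀, (Finset.mem_filter.mp hk).2⟩
  have hw0 : w ≠ 0 := by
    obtain ⟨k₀, h⟩ := hk₀
    intro hcon
    exact h (by rw [hcon]; rfl)
  have hmD : m ≤ D := by
    have h := Finset.card_filter_le (Finset.univ : Finset (Fin D)) (fun k => w k ≠ 0)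
    have : zeroNorm w = (Finset.univ.filter fun k => w k ≠ 0).card := rfl
    simp only [Finset.card_univ, Fintype.card_fin] at h
    omega
  have hvcard : (qpskVecs D).card = 4 ^ D := by
    rw [qpskVecs, Fintype.card_piFinset]
    simp [S19.card_QPSK]
  set Ng := ((qpskVecs D).filter (S19.rowGood w)).card with hNg
  have hNgval : Ng = (4 * 2 ^ m - 4) * 4 ^ (D - m) := S19.card_good ha hw hk₀
  have hNgle : Ng ≤ 4 ^ D := by
    rw [hNg, ← hvcard]
    exact Finset.card_filter_le _ _
  have hbad : ((qpskVecs D).filter (fun s => ¬ S19.rowGood w s)).card = 4 ^ D - Ng := by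
    have h := Finset.card_filter_add_card_filter_not (s := qpskVecs D)
      (p := S19.rowGood w)
    rw [hvcard] at h
    omega
  have hMcard : (qpskMatrices U D).card = (4 ^ D) ^ U := by
    rw [qpskMatrices]
    erw [Fintype.card_piFinset]
    have h : (Fintype.piFinset fun _ : Fin D => QPSK).card = 4 ^ D := hvcard
    simp [h]
  have hBadM : ((qpskMatrices U D).filter
      (fun S => ¬ EclipsedCSI S (Matrix.of fun _ : Fin 1 => w))).card = (4 ^ D - Ng) ^ U := by
    rw [S19.filter_not_ecl hw0]
    erw [Fintype.card_piFinset]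
    simp [hbad]
  have hEclM : ((qpskMatrices U D).filter
      (fun S_D => EclipsedCSI S_D (Matrix.of fun _ : Fin 1 => w))).card
      = (4 ^ D) ^ U - (4 ^ D - Ng) ^ U := by
    have h := Finset.card_filter_add_card_filter_not (s := qpskMatrices U D)
      (p := fun S => EclipsedCSI S (Matrix.of fun _ : Fin 1 => w))
    rw [hBadM, hMcard] at h
    omega
  have hpow_le : (4 ^ D - Ng) ^ U ≤ ((4:ℕ) ^ D) ^ U :=
    Nat.pow_le_pow_left (Nat.sub_le _ _) U
  have hcast2 : ((Ng : ℕ) : ℝ) = ((4:ℝ) * 2 ^ m - 4) * 4 ^ (D - m) := by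
    have h4le : (4:ℕ) ≤ 4 * 2 ^ m := by
      have : (1:ℕ) ≤ 2 ^ m := Nat.one_le_two_pow
      omega
    rw [hNgval]
    push_cast [Nat.cast_sub h4le]
    ring
  have key : ((4 ^ D - Ng : ℕ) : ℝ) / (4:ℝ) ^ D
      = 1 - ((2:ℝ) ^ m - 1) / (4:ℝ) ^ (m - 1) := by
    rw [Nat.cast_sub hNgle, hcast2]
    have hsplit : (4:ℝ) ^ D = 4 ^ m * 4 ^ (D - m) := by
      rw [← pow_add]
      congr 1
      omega
    have hm1 : (4:ℝ) ^ m = 4 * 4 ^ (m - 1) := by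
      rw [← pow_succ']
      congr 1
      omega
    push_cast
    rw [hsplit, hm1]
    have h1 : (4:ℝ) ^ (m-1) ≠ 0 := by positivity
    have h2 : (4:ℝ) ^ (D-m) ≠ 0 := by positivity
    field_simp
  simp only [probM, hEclM, hMcard]
  rw [Nat.cast_sub hpow_le]
  have hNne : ((((4:ℕ) ^ D) ^ U : ℕ) : ℝ) ≠ 0 := by positivity
  rw [sub_div, div_self hNne]
  have hstep : (((4 ^ D - Ng) ^ U : ℕ) : ℝ) / ((((4:ℕ) ^ D) ^ U : ℕ) : ℝ)
      = (((4 ^ D - Ng : ℕ) : ℝ) / (4:ℝ) ^ D) ^ U := by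
    rw [div_pow]
    push_cast
    ring
  rw [hstep, key]
end
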